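/- arXiv:2509.13041 — 6 statements merged into one kernel-verified Lean document; each statement's English description precedes it below -/
import Mathlib

section
/- Let ν be a probability measure on ℝ with finite first moment, centered at 0, such that S(ν) := sup supp(ν) < ∞ and ν({S(ν)}) ≥ β for some β ∈ (0,1) (i.e. ν is atomic β-biased). If ν ≠ δ₀, then writing ν^L := ν restricted to (-∞, m) and ν^R := ν restricted to [m, ∞) where m = 0 is the barycenter, and B_x := (−bar(ν^L))/(x − bar(ν^L)) for x ∈ [0, S(ν)], one has B_x ≥ β for all x ∈ [0, S(ν)]. -/
open MeasureTheory ProbabilityTheory Set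

noncomputable section

/-- Topological support of a measure on `ℝ`: points all of whose neighborhoods have
positive measure. -/
def msupp (ν : Measure ℝ) : Set ℝ := {x : ℝ | ∀ ε > 0, 0 < ν (Metric.ball x ε)}

/-- `S(ν)`, the supremum of the support. -/
def Ssup (ν : Measure ℝ) : ℝ := sSup (msupp ν)

/-- `s(ν)`, the infimum of the support. -/
def sinf (ν : Measure ℝ) : ℝ := sInf (msupp ν)

/-- Barycenter of a finite measure. -/
def barOf (ν : Measure ℝ) : ℝ := (∫ y, y ∂ν) / (ν Set.univ).toReal

/-- A probability measure centered at `0` is simple `β`-biased if its restriction to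
`[0,∞)` is a single atom of mass at least `β`. -/
def IsSimpleBiased (β : ℝ) (ν : Measure ℝ) : Prop :=
  IsProbabilityMeasure ν ∧ Integrable id ν ∧ (∫ y, y ∂ν) = 0 ∧
  ∃ M : ℝ, 0 ≤ M ∧ ν.restrict (Set.Ici 0) = ν {M} • Measure.dirac M ∧
    ENNReal.ofReal β ≤ ν {M}

/-- A probability measure centered at `0` is atomic `β`-biased if its support is bounded
above and it has an atom of mass at least `β` at the maximum of its support. -/
def IsAtomicBiased (β : ℝ) (ν : Measure ℝ) : Prop :=
  IsProbabilityMeasure ν ∧ Integrable id ν ∧ (∫ y, y ∂ν) = 0 ∧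
  BddAbove (msupp ν) ∧ ENNReal.ofReal β ≤ ν {Ssup ν}

/-- `ν` is a mixture of measures satisfying `P`. -/
def IsMixtureOf (ν : Measure ℝ) (P : Measure ℝ → Prop) : Prop :=
  ∃ ρ : Measure ℝ, IsProbabilityMeasure ρ ∧
    ∃ κ : ProbabilityTheory.Kernel ℝ ℝ, IsMarkovKernel κ ∧
      (∀ x : ℝ, P (κ x)) ∧ ν = ρ.bind (fun x => κ x)

/-- `β`-biased probability measure (centered at `0`). -/
def IsBiased (β : ℝ) (ν : Measure ℝ) : Prop := IsMixtureOf ν (IsAtomicBiased β)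

/-- `β`-biased around `x`. -/
def IsBiasedAround (β x : ℝ) (ν : Measure ℝ) : Prop :=
  IsBiased β (ν.map (fun y => y - x))

/-- Strongly `β`-biased probability measure (centered at `0`). -/
def IsStronglyBiased (β : ℝ) (ν : Measure ℝ) : Prop :=
  ∃ ρ : Measure ℝ, IsProbabilityMeasure ρ ∧
    ∃ κ : ProbabilityTheory.Kernel ℝ ℝ, IsMarkovKernel κ ∧
      ∃ γ : ℝ → ℝ, (∀ x : ℝ, β < γ x ∧ IsSimpleBiased (γ x) (κ x)) ∧
        ν = ρ.bind (fun x => κ x)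

/-- Strongly `β`-biased around `x`. -/
def IsStronglyBiasedAround (β x : ℝ) (ν : Measure ℝ) : Prop :=
  IsStronglyBiased β (ν.map (fun y => y - x))

/-- Convex order between finite measures on `ℝ`. -/
def ConvexOrder (μ ν : Measure ℝ) : Prop :=
  ∀ φ : ℝ → ℝ, ConvexOn ℝ Set.univ φ → Integrable φ μ → Integrable φ ν →
    ∫ y, φ y ∂μ ≤ ∫ y, φ y ∂ν

/-- The distorted reflection `R^β`. -/
def Rbeta (β : ℝ) : ℝ → ℝ := fun x =>
  if 0 ≤ x then -(β / (1 - β)) * x else -((1 - β) / β) * x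

/-- The transform `Z^β`. -/
def Zbeta (β : ℝ) (f : ℝ → ℝ) : ℝ → ℝ := fun x =>
  if 0 < x then ((1 - β) / β) * f ((β / (1 - β)) * x) else f x

/-- The `β`-biased order `μ ≼_β ν`: existence of a kernel `κ` with `ν = μ.bind κ` such
that `κ x` is `β`-biased around `x` for `μ`-a.e. `x`. -/
def BiasedOrder (β : ℝ) (μ ν : Measure ℝ) : Prop :=
  ∃ κ : ProbabilityTheory.Kernel ℝ ℝ, IsMarkovKernel κ ∧
    (∀ᵐ x ∂μ, IsBiasedAround β x (κ x)) ∧ ν = μ.bind (fun x => κ x)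

/-- The strong `β`-biased order `μ ≼_{sβ} ν`. -/
def StrongBiasedOrder (β : ℝ) (μ ν : Measure ℝ) : Prop :=
  ∃ κ : ProbabilityTheory.Kernel ℝ ℝ, IsMarkovKernel κ ∧
    (∀ᵐ x ∂μ, IsStronglyBiasedAround β x (κ x)) ∧ ν = μ.bind (fun x => κ x)

/-- The 1-Wasserstein distance between probability measures on `ℝ`. -/
def W1 (μ ν : Measure ℝ) : ℝ :=
  sInf {c : ℝ | ∃ π : Measure (ℝ × ℝ), IsProbabilityMeasure π ∧
    π.map Prod.fst = μ ∧ π.map Prod.snd = ν ∧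
    Integrable (fun p => |p.1 - p.2|) π ∧ c = ∫ p, |p.1 - p.2| ∂π}

/-- `η` is a regular conditional law of `X` given the sub-σ-algebra `m₀`. -/
def IsCondLaw {Ω : Type*} [mΩ : MeasurableSpace Ω] (m₀ : MeasurableSpace Ω)
    (P : Measure Ω) (X : Ω → ℝ) (η : Ω → Measure ℝ) : Prop :=
  (∀ ω, IsProbabilityMeasure (η ω)) ∧
  ∀ B : Set ℝ, MeasurableSet B →
    (fun ω => (η ω B).toReal) =ᵐ[P] P[(X ⁻¹' B).indicator (fun _ => (1 : ℝ))|m₀]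


/-- for an atomic `β`-biased probability `ν ≠ δ₀`,
`B_x = (-bar ν^L)/(x - bar ν^L) ≥ β` for all `x ∈ [0, S(ν)]`. -/
theorem stmt0 (β : ℝ) (hβ : β ∈ Set.Ioo (0 : ℝ) 1) (ν : Measure ℝ)
    (hprob : IsProbabilityMeasure ν) (hint : Integrable id ν)
    (hbar : (∫ y, y ∂ν) = 0) (hbdd : BddAbove (msupp ν))
    (hatom : ENNReal.ofReal β ≤ ν {Ssup ν}) (hne : ν ≠ Measure.dirac 0) :
    ∀ x ∈ Set.Icc (0 : ℝ) (Ssup ν),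
      β ≤ (-(barOf (ν.restrict (Set.Iio 0)))) /
        (x - barOf (ν.restrict (Set.Iio 0))) := by
  obtain ⟨hβ0, hβ1⟩ := hβ
  intro x hx
  obtain ⟨hx0, hxS⟩ := hx
  set S := Ssup ν with hSdef
  have hS0 : (0:ℝ) ≤ S := le_trans hx0 hxS
  have ht : β ≤ (ν {S}).toReal :=
    (ENNReal.ofReal_le_iff_le_toReal (measure_ne_top ν _)).mp hatom
  -- ν (Iio 0) > 0
  have hp : 0 < ν (Set.Iio 0) := by
    by_contra h
    push_neg at h
    have h0 : ν (Set.Iio 0) = 0 := le_antisymm h zero_le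
    have hae : 0 ≤ᵐ[ν] (id : ℝ → ℝ) := by
      rw [Filter.EventuallyLE, ae_iff]
      convert h0 using 2
      ext y; simp [not_le]
    have hz : (id : ℝ → ℝ) =ᵐ[ν] 0 := by
      have hiff := integral_eq_zero_iff_of_nonneg_ae hae hint
      exact hiff.mp (by simpa [id] using hbar)
    have hd : ν = Measure.dirac 0 := by
      have h1 : ν.map id = ν.map (fun _ => (0:ℝ)) := Measure.map_congr hz
      rw [Measure.map_id, Measure.map_const] at h1
      simpa [measure_univ] using h1
    exact hne hd
  set p := (ν (Set.Iio 0)).toReal with hpdef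
  have hp0 : 0 < p := ENNReal.toReal_pos hp.ne' (measure_ne_top _ _)
  have hdisj : Disjoint (Set.Iio (0:ℝ)) {S} := by
    simp [Set.disjoint_singleton_right, not_lt, hS0]
  have hp_le : p ≤ 1 - β := by
    have hsum : ν (Set.Iio 0) + ν {S} ≤ 1 := by
      rw [← measure_union hdisj (measurableSet_singleton S)]
      exact prob_le_one
    have h1 : ((ν (Set.Iio 0) + ν {S})).toReal ≤ 1 := by
      have := ENNReal.toReal_mono ENNReal.one_ne_top hsum
      simpa using this
    rw [ENNReal.toReal_add (measure_ne_top _ _) (measure_ne_top _ _)] at h1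
    linarith
  -- integrals
  have hL : IntegrableOn id (Set.Iio 0) ν := hint.integrableOn
  have hR : IntegrableOn id (Set.Ici 0) ν := hint.integrableOn
  set I := ∫ y in Set.Iio 0, y ∂ν with hIdef
  have hsplit : I + (∫ y in Set.Ici 0, y ∂ν) = 0 := by
    have h := integral_add_compl (measurableSet_Iio (a := (0:ℝ))) hint
    rw [Set.compl_Iio] at h
    simpa [hIdef, id] using h.trans hbar
  have hSsingle : (∫ y in ({S} : Set ℝ), y ∂ν) = S * (ν {S}).toReal := by
    rw [Measure.restrict_singleton, integral_smul_measure, integral_dirac]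
    rw [mul_comm]
    simp [ENNReal.toReal]
  have hRge : S * (ν {S}).toReal ≤ ∫ y in Set.Ici 0, y ∂ν := by
    rw [← hSsingle]
    refine setIntegral_mono_set hR ?_ ?_
    · filter_upwards [ae_restrict_mem measurableSet_Ici] with y hy
      exact hy
    · exact HasSubset.Subset.eventuallyLE (by simpa using hS0)
  have hIneg : I < 0 := by
    have hpos : 0 < ∫ y in Set.Iio 0, -y ∂ν := by
      rw [setIntegral_pos_iff_support_of_nonneg_ae]
      · have hsub : Set.Iio (0:ℝ) ⊆ Function.support (fun y : ℝ => -y) ∩ Set.Iio 0 := by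
          intro y hy
          exact ⟨by simp [Function.mem_support]; linarith [hy.out], hy⟩
        exact lt_of_lt_of_le hp (measure_mono hsub)
      · filter_upwards [ae_restrict_mem measurableSet_Iio] with y hy
        simp only [Set.mem_Iio] at hy
        simp only [Pi.zero_apply]
        linarith
      · exact hL.neg
    have : (∫ y in Set.Iio 0, -y ∂ν) = -I := by
      rw [hIdef, ← integral_neg]
    linarith [this ▸ hpos]
  have hbarL : barOf (ν.restrict (Set.Iio 0)) = I / p := by
    simp only [barOf, Measure.restrict_apply_univ, hIdef, hpdef]
  have hβx : β * x ≤ -I := by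
    have h1 : β * x ≤ β * S := mul_le_mul_of_nonneg_left hxS hβ0.le
    have h2 : β * S ≤ (ν {S}).toReal * S := mul_le_mul_of_nonneg_right ht hS0
    nlinarith [hRge, hsplit]
  rw [hbarL]
  have hb : I / p < 0 := div_neg_of_neg_of_pos hIneg hp0
  have hpos : 0 < x - I / p := by linarith
  have hpos2 : 0 < x * p - I := by nlinarith
  have hrw : -(I / p) / (x - I / p) = (-I) / (x * p - I) := by
    rw [div_eq_div_iff hpos.ne' hpos2.ne']
    field_simp
  rw [hrw, le_div_iff₀ hpos2]
  nlinarith [mul_le_mul_of_nonneg_right hβx hp0.le,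
    mul_le_mul_of_nonneg_left hp_le (by linarith : (0:ℝ) ≤ -I)]


end
end

section
/- Every atomic β-biased probability measure ν on ℝ (centered at 0, with finite first moment) can be written as a mixture ν = ∫ ν_x ρ(dx) over a probability measure ρ, where each ν_x is a simple β-biased probability measure, i.e., ν_x is centered at 0 and ν_x restricted to [0,∞) consists of a single atom of mass at least β. -/
open MeasureTheory ProbabilityTheory Set

noncomputable section

set_option maxHeartbeats 1000000

lemma integrable_id_dirac (a : ℝ) : Integrable id (Measure.dirac a) :=
  (integrable_const (id a)).congr (ae_eq_dirac id).symm

lemma msupp_compl_null (ν : Measure ℝ) : ν {x | x ∉ msupp ν} = 0 := by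
  classical
  set U : ℚ × ℚ → Set ℝ := fun p =>
    if ν (Metric.ball (p.1 : ℝ) (p.2 : ℝ)) = 0 then Metric.ball (p.1 : ℝ) (p.2 : ℝ) else ∅ with hU
  have hnull : ∀ p, ν (U p) = 0 := by
    intro p
    by_cases h : ν (Metric.ball (p.1 : ℝ) (p.2 : ℝ)) = 0 <;> simp [hU, h]
  refine measure_mono_null ?_ (measure_iUnion_null hnull)
  intro x hx
  simp only [mem_setOf_eq, msupp] at hx
  push_neg at hx
  obtain ⟨ε, hε, hball⟩ := hx
  have hball0 : ν (Metric.ball x ε) = 0 := le_antisymm hball bot_le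
  obtain ⟨q, hq1, hq2⟩ := exists_rat_btwn (by linarith : x - ε/4 < x + ε/4)
  obtain ⟨r, hr1, hr2⟩ := exists_rat_btwn (by linarith : ε/4 < ε/2)
  have hxq : |x - (q : ℝ)| < ε/4 := abs_sub_lt_iff.2 ⟨by linarith, by linarith⟩
  have hmem : x ∈ Metric.ball (q : ℝ) (r : ℝ) := by
    have : dist x (q : ℝ) < ε/4 := by rwa [Real.dist_eq]
    exact Metric.mem_ball.2 (lt_trans this hr1)
  have hsub : Metric.ball (q : ℝ) (r : ℝ) ⊆ Metric.ball x ε := by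
    intro z hz
    rw [Metric.mem_ball] at hz ⊢
    have h1 : dist z x ≤ dist z (q : ℝ) + dist (q : ℝ) x := dist_triangle _ _ _
    have h2 : dist (q : ℝ) x < ε/4 := by rw [dist_comm, Real.dist_eq]; exact hxq
    linarith
  have hq0 : ν (Metric.ball (q : ℝ) (r : ℝ)) = 0 := measure_mono_null hsub hball0
  refine mem_iUnion.2 ⟨(q, r), ?_⟩
  simp [hU, hq0, hmem]

lemma isSimpleBiased_dirac0 {β : ℝ} (hβ : β ≤ 1) : IsSimpleBiased β (Measure.dirac 0) := by
  classical
  refine ⟨by infer_instance, integrable_id_dirac 0, by simp [integral_dirac], 0, le_refl 0, ?_, ?_⟩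
  · rw [restrict_dirac' measurableSet_Ici]
    simp
  · simp [hβ]

lemma inter_singleton_eq (ν : Measure ℝ) {B : Set ℝ} (hB : MeasurableSet B) (a : ℝ) :
    ν (B ∩ {a}) = ν {a} * Measure.dirac a B := by
  classical
  rw [Measure.dirac_apply' _ hB]
  by_cases ha : a ∈ B
  · rw [Set.inter_eq_self_of_subset_right (by simpa using ha), indicator_of_mem ha]
    simp
  · rw [indicator_of_notMem ha]
    have : B ∩ {a} = ∅ := by
      ext z; simp only [mem_inter_iff, mem_singleton_iff, mem_empty_iff_false, iff_false,
        not_and]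
      rintro hz rfl; exact ha hz
    simp [this]

lemma prob_of_bind {ρ ν : Measure ℝ} (κ : Kernel ℝ ℝ) [IsMarkovKernel κ]
    [IsProbabilityMeasure ν] (h : ν = ρ.bind (fun x => κ x)) : IsProbabilityMeasure ρ := by
  constructor
  have h1 : ν Set.univ = 1 := measure_univ
  rw [h, Measure.bind_apply MeasurableSet.univ κ.measurable.aemeasurable] at h1
  simpa using h1

lemma main_case {β S : ℝ} (hβ0 : 0 < β) (hβ1 : β < 1) {ν : Measure ℝ}
    (hprob : IsProbabilityMeasure ν) (hint : Integrable id ν) (hbar : ∫ y, y ∂ν = 0)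
    (hS : 0 < S) (hbS : ENNReal.ofReal β ≤ ν {S}) (hub : ν (Ioi S) = 0)
    (hm : ν (Iio 0) ≠ 0) : IsMixtureOf ν (IsSimpleBiased β) := by
  classical
  haveI := hprob
  -- real constants
  set b' : ℝ := (ν {S}).toReal with hb'def
  set m : ℝ := (ν (Iio 0)).toReal with hmdef
  have hfin : ∀ A : Set ℝ, ν A ≠ ⊤ := fun A => measure_ne_top ν A
  have hβb' : β ≤ b' := by
    have := ENNReal.toReal_mono (hfin {S}) hbS
    rwa [ENNReal.toReal_ofReal hβ0.le] at this
  have hb'pos : 0 < b' := lt_of_lt_of_le hβ0 hβb'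
  have hmpos : 0 < m := by
    have := ENNReal.toReal_pos hm (hfin _)
    exact this
  have hdisjS : Disjoint ({S} : Set ℝ) (Iio 0) := by
    rw [Set.disjoint_left]; rintro z rfl hz
    exact absurd (mem_Iio.1 hz) (not_lt.2 hS.le)
  have hSm1 : ν {S} + ν (Iio 0) ≤ 1 := by
    rw [← measure_union hdisjS measurableSet_Iio]
    exact (measure_mono (subset_univ _)).trans_eq measure_univ
  have hmb1 : b' + m ≤ 1 := by
    have := ENNReal.toReal_mono (by simp : (1:ENNReal) ≠ ⊤) hSm1
    rwa [ENNReal.toReal_add (hfin _) (hfin _), ENNReal.toReal_one] at this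
  set T : ℝ := S * b' / m with hTdef
  have hT : 0 < T := div_pos (mul_pos hS hb'pos) hmpos
  set As : Set ℝ := Ico (-T) 0 with hAsdef
  set Ab : Set ℝ := Iio (-T) with hAbdef
  have hAsm : MeasurableSet As := measurableSet_Ico
  have hAbm : MeasurableSet Ab := measurableSet_Iio
  have hABdisj : Disjoint Ab As := by
    rw [Set.disjoint_left]; intro z hz hz'
    exact absurd (mem_Ico.1 hz').1 (not_le.2 (mem_Iio.1 hz))
  have hABunion : Ab ∪ As = Iio 0 := Iio_union_Ico_eq_Iio (by linarith)
  set ms : ℝ := (ν As).toReal with hmsdef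
  set mb : ℝ := (ν Ab).toReal with hmbdef
  have hms0 : 0 ≤ ms := ENNReal.toReal_nonneg
  have hmb0 : 0 ≤ mb := ENNReal.toReal_nonneg
  have hmsum : m = mb + ms := by
    rw [hmdef, ← hABunion, measure_union hABdisj hAsm,
      ENNReal.toReal_add (hfin _) (hfin _)]
  -- integrals
  have hint' : Integrable (fun y => (y:ℝ)) ν := hint
  set Is : ℝ := -∫ y in As, y ∂ν with hIsdef
  set Ib : ℝ := -∫ y in Ab, y ∂ν with hIbdef
  set Ipos : ℝ := ∫ y in Ici 0, y ∂ν with hIposdef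
  have hintAs : IntegrableOn (fun y => (y:ℝ)) As ν := hint'.integrableOn
  have hintAb : IntegrableOn (fun y => (y:ℝ)) Ab ν := hint'.integrableOn
  have hbalance : Ipos = Is + Ib := by
    have h1 : ∫ y in Iio 0, y ∂ν + ∫ y in Ici 0, y ∂ν = 0 := by
      have := integral_add_compl (s := Iio (0:ℝ)) measurableSet_Iio hint'
      rw [compl_Iio] at this
      rw [this, hbar]
    have h2 : ∫ y in Iio 0, y ∂ν = ∫ y in Ab, y ∂ν + ∫ y in As, y ∂ν := by
      rw [← hABunion, setIntegral_union hABdisj hAsm hintAb hintAs]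
    rw [hIposdef, hIsdef, hIbdef]
    linarith
  have hIs0 : 0 ≤ Is := by
    rw [hIsdef, neg_nonneg]
    apply setIntegral_nonpos hAsm
    intro x hx; exact le_of_lt (mem_Ico.1 hx).2
  have hIsle : Is ≤ T * ms := by
    rw [hIsdef, neg_le]
    have : ∫ y in As, (-T : ℝ) ∂ν ≤ ∫ y in As, y ∂ν := by
      apply setIntegral_mono_on (integrableOn_const (measure_lt_top ν As).ne) hintAs hAsm
      intro x hx; exact (mem_Ico.1 hx).1
    rw [setIntegral_const] at this
    calc -(T * ms) = (ν As).toReal • (-T : ℝ) := by rw [smul_eq_mul]; ring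
    _ ≤ ∫ y in As, y ∂ν := this
  have hIbge : T * mb ≤ Ib := by
    rw [hIbdef, le_neg]
    have : ∫ y in Ab, y ∂ν ≤ ∫ y in Ab, (-T : ℝ) ∂ν := by
      apply setIntegral_mono_on hintAb (integrableOn_const (measure_lt_top ν Ab).ne) hAbm
      intro x hx; exact le_of_lt (mem_Iio.1 hx)
    rw [setIntegral_const] at this
    calc ∫ y in Ab, y ∂ν ≤ (ν Ab).toReal • (-T : ℝ) := this
    _ = -(T * mb) := by rw [smul_eq_mul]; ring
  have hIb0 : 0 ≤ Ib := le_trans (by positivity) hIbge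
  set s0 : ℝ := S * b' with hs0def
  have hTm : T * m = s0 := by rw [hTdef, hs0def]; field_simp
  have hs0pos : 0 < s0 := mul_pos hS hb'pos
  have hsingint : ∫ y in {S}, y ∂ν = S * b' := by
    rw [Measure.restrict_singleton, integral_smul_measure, integral_dirac, smul_eq_mul]
    ring
  have hs0le : s0 ≤ Ipos := by
    rw [hs0def, ← hsingint, hIposdef]
    have hsub : ({S} : Set ℝ) ⊆ Ici 0 := by
      intro z hz; simp only [mem_singleton_iff] at hz; subst hz; exact hS.le
    apply setIntegral_mono_set hint'.integrableOn
    · exact (ae_restrict_mem measurableSet_Ici).mono fun x hx => hx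
    · exact HasSubset.Subset.eventuallyLE hsub
  have hIss0 : Is ≤ s0 := by
    calc Is ≤ T * ms := hIsle
    _ ≤ T * m := by
        apply mul_le_mul_of_nonneg_left _ hT.le
        rw [hmsum]; linarith
    _ = s0 := hTm
  have hIooint : ∫ y in Ioo 0 S, y ∂ν = Ipos - s0 := by
    have hIciS : (Ici S : Set ℝ) = {S} ∪ Ioi S := by
      ext z; simp [mem_Ici, mem_Ioi, le_iff_lt_or_eq, or_comm, eq_comm]
    have hIoiS0 : ∫ y in Ioi S, y ∂ν = 0 := by
      rw [Measure.restrict_eq_zero.2 hub]; simp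
    have hd1 : Disjoint ({S} : Set ℝ) (Ioi S) := by
      rw [Set.disjoint_left]; intro z hz hz'
      simp only [mem_singleton_iff] at hz
      rw [hz] at hz'; exact lt_irrefl _ (mem_Ioi.1 hz')
    have h1 : ∫ y in Ici S, y ∂ν = S * b' := by
      rw [hIciS, setIntegral_union hd1 measurableSet_Ioi hint'.integrableOn hint'.integrableOn,
        hIoiS0, hsingint, add_zero]
    have hIoi0 : (Ioi 0 : Set ℝ) = Ioo 0 S ∪ Ici S := (Ioo_union_Ici_eq_Ioi hS).symm
    have hd2 : Disjoint (Ioo 0 S) (Ici S) := by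
      rw [Set.disjoint_left]; intro z hz hz'; exact absurd (mem_Ici.1 hz') (not_le.2 (mem_Ioo.1 hz).2)
    have h2 : ∫ y in Ioi 0, y ∂ν = (∫ y in Ioo 0 S, y ∂ν) + S * b' := by
      rw [hIoi0, setIntegral_union hd2 measurableSet_Ici hint'.integrableOn hint'.integrableOn, h1]
    have hIci0 : (Ici 0 : Set ℝ) = {0} ∪ Ioi 0 := by
      ext z; simp [mem_Ici, mem_Ioi, le_iff_lt_or_eq, or_comm, eq_comm]
    have hd3 : Disjoint ({0} : Set ℝ) (Ioi 0) := by
      rw [Set.disjoint_left]; intro z hz hz'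
      simp only [mem_singleton_iff] at hz
      rw [hz] at hz'; exact lt_irrefl _ (mem_Ioi.1 hz')
    have h3 : Ipos = (∫ y in Ioo 0 S, y ∂ν) + S * b' := by
      rw [hIposdef, hIci0, setIntegral_union hd3 measurableSet_Ioi hint'.integrableOn hint'.integrableOn, ← h2]
      have h4 : ∫ y in ({0} : Set ℝ), y ∂ν = 0 := by
        rw [Measure.restrict_singleton, integral_smul_measure, integral_dirac, smul_eq_mul, mul_zero]
      rw [h4, zero_add]
    rw [h3, hs0def]; ring
  have hIoom : MeasurableSet (Ioo (0:ℝ) S) := measurableSet_Ioo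
  have hdecomp : ∀ B : Set ℝ, MeasurableSet B →
      ν B = ν (B ∩ {0}) + ν (B ∩ {S}) + ν (B ∩ As) + ν (B ∩ Ab) + ν (B ∩ Ioo 0 S) := by
    intro B hB
    set U : Set ℝ := {0} ∪ ({S} ∪ (As ∪ (Ab ∪ Ioo 0 S))) with hUdef
    have hUm : MeasurableSet U := by
      apply MeasurableSet.union (measurableSet_singleton 0)
      apply MeasurableSet.union (measurableSet_singleton S)
      exact (hAsm.union (hAbm.union hIoom))
    have hsplit : ν (B ∩ U) + ν (B \ U) = ν B := measure_inter_add_diff B hUm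
    have hnull : ν (B \ U) = 0 := by
      apply measure_mono_null _ hub
      intro z hz
      obtain ⟨hzB, hzU⟩ := hz
      simp only [hUdef, mem_union, mem_singleton_iff, hAsdef, hAbdef, mem_Ico, mem_Iio,
        mem_Ioo, not_or, not_and, not_lt, not_le] at hzU
      obtain ⟨h0, hS', hAs', hAb', hIoo'⟩ := hzU
      rw [mem_Ioi]
      rcases lt_trichotomy z 0 with h | h | h
      · rcases lt_or_ge z (-T) with h2 | h2
        · exact absurd h2 (not_lt.2 hAb')
        · exact absurd h (not_lt.2 (by simpa using hAs' h2))
      · exact absurd h h0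
      · rcases lt_or_ge S z with h2 | h2
        · exact h2
        · rcases eq_or_lt_of_le h2 with h3 | h3
          · exact absurd h3 (by simpa [eq_comm] using hS')
          · exact absurd h3 (not_lt.2 (hIoo' h))
    have hd3 : Disjoint Ab (Ioo 0 S) := by
      rw [Set.disjoint_left]; intro z hz hz'
      rw [hAbdef, mem_Iio] at hz; rw [mem_Ioo] at hz'
      linarith [hz'.1, hT]
    have hd2 : Disjoint As (Ab ∪ Ioo 0 S) := by
      rw [Set.disjoint_left]; intro z hz hz'
      rw [hAsdef, mem_Ico] at hz
      rcases hz' with h | h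
      · rw [hAbdef, mem_Iio] at h; linarith [hz.1]
      · rw [mem_Ioo] at h; linarith [hz.2, h.1]
    have hd1 : Disjoint ({S} : Set ℝ) (As ∪ (Ab ∪ Ioo 0 S)) := by
      rw [Set.disjoint_left]; intro z hz hz'
      rw [mem_singleton_iff] at hz; subst hz
      rcases hz' with h | h | h
      · rw [hAsdef, mem_Ico] at h; linarith [h.2]
      · rw [hAbdef, mem_Iio] at h; linarith [hT]
      · rw [mem_Ioo] at h; linarith [h.2]
    have hd0 : Disjoint ({0} : Set ℝ) ({S} ∪ (As ∪ (Ab ∪ Ioo 0 S))) := by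
      rw [Set.disjoint_left]; intro z hz hz'
      rw [mem_singleton_iff] at hz; subst hz
      rcases hz' with h | h | h | h
      · rw [mem_singleton_iff] at h; linarith [hS, h.symm.le, h.symm]
      · rw [hAsdef, mem_Ico] at h; linarith [h.2]
      · rw [hAbdef, mem_Iio] at h; linarith [hT]
      · rw [mem_Ioo] at h; linarith [h.1]
    have expand : ν (B ∩ U) = ν (B ∩ {0}) + ν (B ∩ {S}) + ν (B ∩ As) + ν (B ∩ Ab) + ν (B ∩ Ioo 0 S) := by
      rw [hUdef, inter_union_distrib_left,
        measure_union (hd0.mono inter_subset_right inter_subset_right)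
          (hB.inter ((measurableSet_singleton S).union (hAsm.union (hAbm.union hIoom)))),
        inter_union_distrib_left,
        measure_union (hd1.mono inter_subset_right inter_subset_right)
          (hB.inter (hAsm.union (hAbm.union hIoom))),
        inter_union_distrib_left,
        measure_union (hd2.mono inter_subset_right inter_subset_right)
          (hB.inter (hAbm.union hIoom)),
        inter_union_distrib_left,
        measure_union (hd3.mono inter_subset_right inter_subset_right) (hB.inter hIoom)]
      ring
    rw [← hsplit, hnull, add_zero, expand]
  have hβE0 : (ENNReal.ofReal β) ≠ 0 := by
    simp [ENNReal.ofReal_eq_zero, not_le, hβ0]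
  by_cases hmbz : ν Ab = 0
  · -- Case A : no mass far below
    have hIbz : Ib = 0 := by
      rw [hIbdef, Measure.restrict_eq_zero.2 hmbz]; simp
    have hIpose : Ipos = s0 := le_antisymm (by rw [hbalance, hIbz, add_zero]; exact hIss0) hs0le
    have hIse : Is = s0 := by rw [hbalance, hIbz, add_zero] at hIpose; exact hIpose
    have hIoo0 : ν (Ioo 0 S) = 0 := by
      have hae : 0 ≤ᵐ[ν.restrict (Ioo 0 S)] (fun y => (y:ℝ)) :=
        (ae_restrict_mem hIoom).mono fun x hx => (mem_Ioo.1 hx).1.le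
      have hz := (integral_eq_zero_iff_of_nonneg_ae hae hint'.integrableOn).1
        (by rw [hIooint, hIpose]; ring)
      have hn := ae_iff.1 hz
      have : ν.restrict (Ioo 0 S) (Ioo 0 S) = 0 := by
        apply measure_mono_null _ hn
        intro z hz'
        simp only [mem_setOf_eq, Pi.zero_apply]
        exact ne_of_gt (mem_Ioo.1 hz').1
      rwa [Measure.restrict_apply_self] at this
    -- the measure at S
    set μS : Measure ℝ := ν {S} • Measure.dirac S + ν.restrict As with hμSdef
    set W : ENNReal := ν {S} + ν As with hWdef
    have hμSuniv : μS Set.univ = W := by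
      simp [hμSdef, hWdef, Measure.add_apply, Measure.smul_apply, smul_eq_mul]
    have hW0 : W ≠ 0 := by
      intro h
      rw [hWdef] at h
      have h1 : ν {S} = 0 := le_antisymm (le_trans le_self_add h.le) zero_le
      exact hβE0 (le_antisymm (h1 ▸ hbS) zero_le)
    have hWtop : W ≠ ⊤ := by
      rw [hWdef]; exact ENNReal.add_ne_top.2 ⟨hfin _, hfin _⟩
    have hWle1 : W ≤ 1 := by
      rw [hWdef]
      calc ν {S} + ν As ≤ ν {S} + ν (Iio 0) := by
            apply add_le_add_right (measure_mono _)
            rw [hAsdef]; intro z hz; exact (mem_Ico.1 hz).2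
      _ ≤ 1 := hSm1
    set κS : Measure ℝ := W⁻¹ • μS with hκSdef
    have hκSprob : IsProbabilityMeasure κS := by
      constructor
      rw [hκSdef, Measure.smul_apply, hμSuniv, smul_eq_mul, ENNReal.inv_mul_cancel hW0 hWtop]
    have hκSint : Integrable id κS := by
      rw [hκSdef]
      apply Integrable.smul_measure _ (ENNReal.inv_ne_top.2 hW0)
      rw [hμSdef]
      apply (integrable_add_measure).2
      constructor
      · exact (integrable_id_dirac S).smul_measure (hfin _)
      · exact hint.integrableOn
    have hdint : Integrable (fun y => (y:ℝ)) ((ν {S}) • Measure.dirac S) :=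
      (integrable_id_dirac S).smul_measure (hfin _)
    have hrint : IntegrableOn (fun y => (y:ℝ)) As ν := hint'.integrableOn
    have hμSint : ∫ y, y ∂μS = s0 - Is := by
      rw [hμSdef]
      rw [integral_add_measure hdint hrint]
      rw [integral_smul_measure, integral_dirac, smul_eq_mul]
      have : ∫ y in As, y ∂ν = -Is := by rw [hIsdef]; ring
      rw [this, hs0def, hb'def]; ring
    have hκSbar : ∫ y, y ∂κS = 0 := by
      rw [hκSdef, integral_smul_measure, hμSint, hIse, smul_eq_mul]; ring
    have hAsIci : (Ici (0:ℝ)) ∩ As = ∅ := by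
      ext z; rw [hAsdef]
      simp only [mem_inter_iff, mem_Ici, mem_Ico, mem_empty_iff_false, iff_false, not_and,
        not_lt]
      intro h1 _; exact h1
    have hκSS : κS {S} = W⁻¹ * ν {S} := by
      rw [hκSdef, Measure.smul_apply, hμSdef, Measure.add_apply, Measure.smul_apply,
        Measure.dirac_apply_of_mem (mem_singleton S),
        Measure.restrict_apply (measurableSet_singleton S)]
      have : ({S} : Set ℝ) ∩ As = ∅ := by
        ext z; rw [hAsdef]
        simp only [mem_inter_iff, mem_singleton_iff, mem_Ico, mem_empty_iff_false, iff_false,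
          not_and]
        rintro rfl h2 h3; linarith
      rw [this]
      simp [smul_eq_mul]
    have hκSrestrict : κS.restrict (Ici 0) = κS {S} • Measure.dirac S := by
      rw [hκSS, hκSdef, Measure.restrict_smul, hμSdef, Measure.restrict_add,
        Measure.restrict_smul, restrict_dirac' measurableSet_Ici, if_pos (mem_Ici.2 hS.le),
        Measure.restrict_restrict measurableSet_Ici, hAsIci, Measure.restrict_empty, add_zero,
        smul_smul]
    have hκSmass : ENNReal.ofReal β ≤ κS {S} := by
      rw [hκSS]
      calc ENNReal.ofReal β = W⁻¹ * (W * ENNReal.ofReal β) := by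
            rw [← mul_assoc, ENNReal.inv_mul_cancel hW0 hWtop, one_mul]
      _ ≤ W⁻¹ * ν {S} := by
            apply mul_le_mul_right
            calc W * ENNReal.ofReal β ≤ 1 * ENNReal.ofReal β := mul_le_mul_left hWle1 _
            _ = ENNReal.ofReal β := one_mul _
            _ ≤ ν {S} := hbS
    have hκSsimple : IsSimpleBiased β κS :=
      ⟨hκSprob, hκSint, hκSbar, S, hS.le, hκSrestrict, hκSmass⟩
    -- the kernel
    haveI : IsProbabilityMeasure κS := hκSprob
    set κ : Kernel ℝ ℝ := Kernel.piecewise (measurableSet_singleton S)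
      (Kernel.const ℝ κS) (Kernel.const ℝ (Measure.dirac 0)) with hκdef
    haveI hκmarkov : IsMarkovKernel κ := by
      rw [hκdef]; infer_instance
    have hκapply : ∀ y : ℝ, κ y = if y = S then κS else Measure.dirac 0 := by
      intro y
      rw [hκdef, Kernel.piecewise_apply]
      simp [mem_singleton_iff]
    set ρ : Measure ℝ := ν {0} • Measure.dirac 0 + W • Measure.dirac S with hρdef
    have hbind : ν = ρ.bind (fun x => κ x) := by
      ext B hB
      rw [Measure.bind_apply hB κ.measurable.aemeasurable, hρdef]
      rw [lintegral_add_measure, lintegral_smul_measure, lintegral_smul_measure,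
        lintegral_dirac' _ (κ.measurable_coe hB), lintegral_dirac' _ (κ.measurable_coe hB)]
      rw [hκapply 0, hκapply S, if_neg (by linarith), if_pos rfl]
      simp only [smul_eq_mul]
      rw [hκSdef, Measure.smul_apply, smul_eq_mul, ← mul_assoc,
        ENNReal.mul_inv_cancel hW0 hWtop, one_mul]
      rw [hμSdef, Measure.add_apply, Measure.smul_apply, smul_eq_mul,
        Measure.restrict_apply hB]
      rw [hdecomp B hB]
      rw [inter_singleton_eq ν hB 0, inter_singleton_eq ν hB S]
      have h1 : ν (B ∩ Ab) = 0 := measure_mono_null inter_subset_right hmbz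
      have h2 : ν (B ∩ Ioo 0 S) = 0 := measure_mono_null inter_subset_right hIoo0
      rw [h1, h2, add_zero, add_zero]
      ring
    refine ⟨ρ, prob_of_bind κ hbind, κ, hκmarkov, fun x => ?_, hbind⟩
    rw [hκapply x]
    split_ifs
    · exact hκSsimple
    · exact isSimpleBiased_dirac0 hβ1.le
  · -- Case B : mass far below exists
    have hmbpos : 0 < mb := ENNReal.toReal_pos hmbz (hfin _)
    have hIbpos : 0 < Ib := lt_of_lt_of_le (mul_pos hT hmbpos) hIbge
    have hAbE : ν Ab = ENNReal.ofReal mb := (ENNReal.ofReal_toReal (hfin _)).symm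
    -- normalized far-below measure
    set lb : Measure ℝ := ν.restrict Ab with hlbdef
    set lbn : Measure ℝ := (ν Ab)⁻¹ • lb with hlbndef
    have hlbuniv : lb Set.univ = ν Ab := by rw [hlbdef, Measure.restrict_apply_univ]
    have hlbnprob : IsProbabilityMeasure lbn := by
      constructor
      rw [hlbndef, Measure.smul_apply, hlbuniv, smul_eq_mul,
        ENNReal.inv_mul_cancel hmbz (hfin _)]
    have hlbnint : Integrable (fun y => (y:ℝ)) lbn := by
      rw [hlbndef]
      exact (hint'.integrableOn).smul_measure (ENNReal.inv_ne_top.2 hmbz)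
    have hlbnbar : ∫ y, y ∂lbn = mb⁻¹ * (-Ib) := by
      rw [hlbndef, integral_smul_measure, ENNReal.toReal_inv, smul_eq_mul, hlbdef]
      have : ∫ y in Ab, y ∂ν = -Ib := by rw [hIbdef]; ring
      rw [this, hmbdef]
    -- the component at S
    set Cs : ENNReal := ENNReal.ofReal ((s0 - Is)/Ib) with hCsdef
    have hCs1 : Cs ≤ 1 := by
      rw [hCsdef, ← ENNReal.ofReal_one]
      apply ENNReal.ofReal_le_ofReal
      rw [div_le_one hIbpos]
      have : Ipos = Is + Ib := hbalance
      linarith [hs0le]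
    have hCstop : Cs ≠ ⊤ := ENNReal.ofReal_ne_top
    set μS : Measure ℝ := ν {S} • Measure.dirac S + ν.restrict As + Cs • lb with hμSdef
    set W : ENNReal := ν {S} + ν As + Cs * ν Ab with hWdef
    have hμSuniv : μS Set.univ = W := by
      simp [hμSdef, hWdef, Measure.add_apply, Measure.smul_apply, smul_eq_mul, hlbuniv,
        Measure.restrict_apply_univ]
    have hW0 : W ≠ 0 := by
      intro h
      rw [hWdef] at h
      have h1 : ν {S} = 0 := by
        have : ν {S} ≤ ν {S} + ν As + Cs * ν Ab := by
          calc ν {S} ≤ ν {S} + ν As := le_self_add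
          _ ≤ ν {S} + ν As + Cs * ν Ab := le_self_add
        exact le_antisymm (h ▸ this) zero_le
      exact hβE0 (le_antisymm (h1 ▸ hbS) zero_le)
    have hWtop : W ≠ ⊤ := by
      rw [hWdef]
      apply ENNReal.add_ne_top.2
      exact ⟨ENNReal.add_ne_top.2 ⟨hfin _, hfin _⟩, ENNReal.mul_ne_top hCstop (hfin _)⟩
    have hWle1 : W ≤ 1 := by
      rw [hWdef]
      have h1 : Cs * ν Ab ≤ ν Ab := by
        calc Cs * ν Ab ≤ 1 * ν Ab := mul_le_mul_left hCs1 _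
        _ = ν Ab := one_mul _
      calc ν {S} + ν As + Cs * ν Ab ≤ ν {S} + ν As + ν Ab := add_le_add_right h1 _
      _ = ν {S} + ν (Iio 0) := by
          rw [add_assoc, ← measure_union hABdisj.symm hAbm]
          rw [Set.union_comm, hABunion]
      _ ≤ 1 := hSm1
    set κS : Measure ℝ := W⁻¹ • μS with hκSdef
    have hκSprob : IsProbabilityMeasure κS := by
      constructor
      rw [hκSdef, Measure.smul_apply, hμSuniv, smul_eq_mul, ENNReal.inv_mul_cancel hW0 hWtop]
    have hdint : Integrable (fun y => (y:ℝ)) ((ν {S}) • Measure.dirac S) :=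
      (integrable_id_dirac S).smul_measure (hfin _)
    have hlbint : Integrable (fun y => (y:ℝ)) (Cs • lb) := by
      rw [hlbdef]
      exact (hint'.integrableOn).smul_measure hCstop
    have hκSint : Integrable id κS := by
      rw [hκSdef]
      apply Integrable.smul_measure _ (ENNReal.inv_ne_top.2 hW0)
      rw [hμSdef]
      apply (integrable_add_measure).2
      exact ⟨(integrable_add_measure).2 ⟨hdint, hint'.integrableOn⟩, hlbint⟩
    have hκSbar : ∫ y, y ∂κS = 0 := by
      rw [hκSdef, integral_smul_measure]
      have h1 : ∫ y, y ∂μS = 0 := by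
        rw [hμSdef]
        rw [integral_add_measure ((integrable_add_measure).2 ⟨hdint, hint'.integrableOn⟩) hlbint]
        rw [integral_add_measure hdint hint'.integrableOn]
        rw [integral_smul_measure, integral_dirac, integral_smul_measure, smul_eq_mul, smul_eq_mul]
        have h2 : ∫ y in As, y ∂ν = -Is := by rw [hIsdef]; ring
        have h3 : ∫ y, y ∂lb = -Ib := by rw [hlbdef]; rw [hIbdef]; ring
        rw [h2, h3, hCsdef, ENNReal.toReal_ofReal (div_nonneg (by linarith) hIb0), ← hb'def]
        have e : (s0 - Is) / Ib * -Ib = -(s0 - Is) := by field_simp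
        rw [e, hs0def]; ring
      rw [h1, smul_eq_mul, mul_zero]
    have hAsIci : (Ici (0:ℝ)) ∩ As = ∅ := by
      ext z; rw [hAsdef]
      simp only [mem_inter_iff, mem_Ici, mem_Ico, mem_empty_iff_false, iff_false, not_and,
        not_lt]
      intro h1 _; exact h1
    have hAbIci : (Ici (0:ℝ)) ∩ Ab = ∅ := by
      ext z; rw [hAbdef]
      simp only [mem_inter_iff, mem_Ici, mem_Iio, mem_empty_iff_false, iff_false, not_and,
        not_lt]
      intro h1; linarith
    have hκSS : κS {S} = W⁻¹ * ν {S} := by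
      rw [hκSdef, Measure.smul_apply, hμSdef, Measure.add_apply, Measure.add_apply,
        Measure.smul_apply, Measure.dirac_apply_of_mem (mem_singleton S),
        Measure.restrict_apply (measurableSet_singleton S), Measure.smul_apply, hlbdef,
        Measure.restrict_apply (measurableSet_singleton S)]
      have e1 : ({S} : Set ℝ) ∩ As = ∅ := by
        ext z; rw [hAsdef]
        simp only [mem_inter_iff, mem_singleton_iff, mem_Ico, mem_empty_iff_false, iff_false,
          not_and]
        rintro rfl h2 h3; linarith
      have e2 : ({S} : Set ℝ) ∩ Ab = ∅ := by
        ext z; rw [hAbdef]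
        simp only [mem_inter_iff, mem_singleton_iff, mem_Iio, mem_empty_iff_false, iff_false,
          not_and]
        rintro rfl h2; linarith
      rw [e1, e2]
      simp [smul_eq_mul]
    have hκSrestrict : κS.restrict (Ici 0) = κS {S} • Measure.dirac S := by
      rw [hκSS, hκSdef, Measure.restrict_smul, hμSdef, Measure.restrict_add,
        Measure.restrict_add, Measure.restrict_smul, Measure.restrict_smul,
        restrict_dirac' measurableSet_Ici, if_pos (mem_Ici.2 hS.le), hlbdef,
        Measure.restrict_restrict measurableSet_Ici, hAsIci,
        Measure.restrict_restrict measurableSet_Ici, hAbIci, Measure.restrict_empty,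
        add_zero, smul_zero, add_zero, smul_smul]
    have hκSmass : ENNReal.ofReal β ≤ κS {S} := by
      rw [hκSS]
      calc ENNReal.ofReal β = W⁻¹ * (W * ENNReal.ofReal β) := by
            rw [← mul_assoc, ENNReal.inv_mul_cancel hW0 hWtop, one_mul]
      _ ≤ W⁻¹ * ν {S} := by
            apply mul_le_mul_right
            calc W * ENNReal.ofReal β ≤ 1 * ENNReal.ofReal β := mul_le_mul_left hWle1 _
            _ = ENNReal.ofReal β := one_mul _
            _ ≤ ν {S} := hbS
    have hκSsimple : IsSimpleBiased β κS :=
      ⟨hκSprob, hκSint, hκSbar, S, hS.le, hκSrestrict, hκSmass⟩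
    -- the interior components
    set al : ℝ → ℝ := fun y => Ib / (max y 0 * mb + Ib) with haldef
    have hal0 : ∀ y, 0 < al y := by
      intro y
      apply div_pos hIbpos
      have : (0:ℝ) ≤ max y 0 * mb := mul_nonneg (le_max_right y 0) hmb0
      linarith
    have hal1 : ∀ y, al y ≤ 1 := by
      intro y
      rw [haldef]
      apply div_le_one_of_le₀ _ (by positivity)
      have : (0:ℝ) ≤ max y 0 * mb := mul_nonneg (le_max_right y 0) hmb0
      linarith
    have halmeas : Measurable al := by
      apply Measurable.div measurable_const
      exact ((measurable_id.max measurable_const).mul_const mb).add_const Ib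
    set κI : ℝ → Measure ℝ := fun y =>
      ENNReal.ofReal (al y) • Measure.dirac y + ENNReal.ofReal (1 - al y) • lbn with hκIdef
    have hκIapp : ∀ y : ℝ, κI y =
        ENNReal.ofReal (al y) • Measure.dirac y + ENNReal.ofReal (1 - al y) • lbn :=
      fun y => rfl
    have hκImeas : Measurable κI := by
      apply Measure.measurable_of_measurable_coe
      intro s hs
      have : (fun y => κI y s) = fun y =>
          ENNReal.ofReal (al y) * s.indicator 1 y + ENNReal.ofReal (1 - al y) * lbn s := by
        funext y
        rw [hκIapp y]
        simp only [Measure.add_apply, Measure.smul_apply, smul_eq_mul]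
        rw [Measure.dirac_apply' _ hs]
      rw [this]
      apply Measurable.add
      · apply Measurable.mul (halmeas.ennreal_ofReal)
        exact measurable_one.indicator hs
      · exact ((measurable_const.sub halmeas).ennreal_ofReal).mul_const _
    have hκIprob : ∀ y, IsProbabilityMeasure (κI y) := by
      intro y
      constructor
      rw [hκIapp y]
      simp only [Measure.add_apply, Measure.smul_apply, smul_eq_mul]
      rw [Measure.dirac_apply_of_mem (mem_univ y), measure_univ]
      rw [mul_one, mul_one, ← ENNReal.ofReal_add (hal0 y).le (by linarith [hal1 y])]
      simp
    set κIK : Kernel ℝ ℝ := ⟨κI, hκImeas⟩ with hκIKdef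
    haveI : IsMarkovKernel κIK := ⟨fun y => hκIprob y⟩
    haveI : IsProbabilityMeasure κS := hκSprob
    set κ : Kernel ℝ ℝ := Kernel.piecewise (measurableSet_singleton S)
      (Kernel.const ℝ κS)
      (Kernel.piecewise hIoom κIK (Kernel.const ℝ (Measure.dirac 0))) with hκdef
    haveI hκmarkov : IsMarkovKernel κ := by
      rw [hκdef]; infer_instance
    have hκapply : ∀ y : ℝ, κ y =
        if y = S then κS else if y ∈ Ioo 0 S then κI y else Measure.dirac 0 := by
      intro y
      rw [hκdef, Kernel.piecewise_apply, Kernel.piecewise_apply]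
      simp only [mem_singleton_iff, Kernel.const_apply]
      split_ifs <;> rfl
    -- interior components are simple biased
    have hκIsimple : ∀ y ∈ Ioo (0:ℝ) S, IsSimpleBiased β (κI y) := by
      intro y hy
      obtain ⟨hy0, hyS⟩ := mem_Ioo.1 hy
      have hmax : max y 0 = y := max_eq_left hy0.le
      have hD : 0 < y * mb + Ib := by positivity
      have haly : al y = Ib / (y * mb + Ib) := by rw [haldef]; simp [hmax]
      have hyAb : ({y} : Set ℝ) ∩ Ab = ∅ := by
        ext z; rw [hAbdef]
        simp only [mem_inter_iff, mem_singleton_iff, mem_Iio, mem_empty_iff_false, iff_false,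
          not_and]
        rintro rfl h2; linarith
      have hlbny : lbn {y} = 0 := by
        rw [hlbndef, Measure.smul_apply, hlbdef,
          Measure.restrict_apply (measurableSet_singleton y), hyAb]
        simp
      have hmass : κI y {y} = ENNReal.ofReal (al y) := by
        rw [hκIapp y]
        simp only [Measure.add_apply, Measure.smul_apply, smul_eq_mul]
        rw [Measure.dirac_apply_of_mem (mem_singleton y), hlbny]
        simp
      refine ⟨hκIprob y, ?_, ?_, y, hy0.le, ?_, ?_⟩
      · rw [hκIapp y]
        apply (integrable_add_measure).2
        constructor
        · exact (integrable_id_dirac y).smul_measure ENNReal.ofReal_ne_top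
        · exact hlbnint.smul_measure ENNReal.ofReal_ne_top
      · rw [hκIapp y]
        have i1 : Integrable (fun z => (z:ℝ)) (ENNReal.ofReal (al y) • Measure.dirac y) :=
          (integrable_id_dirac y).smul_measure ENNReal.ofReal_ne_top
        have i2 : Integrable (fun z => (z:ℝ)) (ENNReal.ofReal (1 - al y) • lbn) :=
          hlbnint.smul_measure ENNReal.ofReal_ne_top
        rw [integral_add_measure i1 i2]
        rw [integral_smul_measure, integral_smul_measure, integral_dirac, hlbnbar,
          ENNReal.toReal_ofReal (hal0 y).le, ENNReal.toReal_ofReal (by linarith [hal1 y]),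
          smul_eq_mul, smul_eq_mul, haly]
        field_simp
        ring
      · rw [hmass, hκIapp y, Measure.restrict_add, Measure.restrict_smul, Measure.restrict_smul,
          restrict_dirac' measurableSet_Ici, if_pos (mem_Ici.2 hy0.le), hlbndef,
          Measure.restrict_smul, hlbdef, Measure.restrict_restrict measurableSet_Ici, hAbIci,
          Measure.restrict_empty, smul_zero, smul_zero, add_zero]
      · rw [hmass]
        apply ENNReal.ofReal_le_ofReal
        rw [haly, le_div_iff₀ hD]
        have key : β * (y * mb) ≤ (1 - β) * Ib := by
          have k1 : β * (y * mb) ≤ β * (S * mb) := by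
            apply mul_le_mul_of_nonneg_left _ hβ0.le
            exact mul_le_mul_of_nonneg_right hyS.le hmb0
          have k2 : (1 - β) * (T * mb) ≤ (1 - β) * Ib := by
            apply mul_le_mul_of_nonneg_left hIbge (by linarith)
          have k3 : β * (S * mb) ≤ (1 - β) * (T * mb) := by
            have k4 : β * m ≤ (1 - β) * b' := by nlinarith [hβb', hmb1, hβ0.le, hb'pos.le]
            have hTval : T * m = S * b' := by rw [hTm, hs0def]
            have k5 : β * S ≤ (1 - β) * T := by
              rw [← mul_le_mul_iff_left₀ hmpos]
              calc β * S * m = S * (β * m) := by ring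
              _ ≤ S * ((1 - β) * b') := by
                  exact mul_le_mul_of_nonneg_left k4 hS.le
              _ = (1 - β) * (S * b') := by ring
              _ = (1 - β) * (T * m) := by rw [hTval]
              _ = (1 - β) * T * m := by ring
            calc β * (S * mb) = (β * S) * mb := by ring
            _ ≤ ((1 - β) * T) * mb := mul_le_mul_of_nonneg_right k5 hmb0
            _ = (1 - β) * (T * mb) := by ring
          linarith
        nlinarith [hIb0]
    -- the index measure
    set g : ℝ → ENNReal := fun y => 1 + ENNReal.ofReal (y * (mb / Ib)) with hgdef
    have hgmeas : Measurable g := by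
      rw [hgdef]; apply Measurable.const_add
      exact ENNReal.measurable_ofReal.comp (measurable_id.mul_const _)
    set ρ : Measure ℝ := ν {0} • Measure.dirac 0 + W • Measure.dirac S +
      (ν.restrict (Ioo 0 S)).withDensity g with hρdef
    have hbind : ν = ρ.bind (fun x => κ x) := by
      ext B hB
      rw [Measure.bind_apply hB κ.measurable.aemeasurable, hρdef]
      rw [lintegral_add_measure, lintegral_add_measure, lintegral_smul_measure,
        lintegral_smul_measure, lintegral_dirac' _ (κ.measurable_coe hB),
        lintegral_dirac' _ (κ.measurable_coe hB)]
      rw [hκapply 0, hκapply S, if_neg (by linarith), if_pos rfl,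
        if_neg (by simp [mem_Ioo])]
      -- the S-part
      have hSpart : W * κS B = ν {S} * Measure.dirac S B + ν (B ∩ As) + Cs * ν (B ∩ Ab) := by
        rw [hκSdef, Measure.smul_apply, smul_eq_mul, ← mul_assoc,
          ENNReal.mul_inv_cancel hW0 hWtop, one_mul, hμSdef, Measure.add_apply,
          Measure.add_apply, Measure.smul_apply, Measure.smul_apply, smul_eq_mul, smul_eq_mul,
          Measure.restrict_apply hB, hlbdef, Measure.restrict_apply hB]
      simp only [smul_eq_mul]
      rw [hSpart]
      -- the interior part
      have hIpart : ∫⁻ y, κ y B ∂((ν.restrict (Ioo 0 S)).withDensity g) =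
          ν (B ∩ Ioo 0 S) + ENNReal.ofReal ((Ipos - s0)/Ib) * ν (B ∩ Ab) := by
        rw [lintegral_withDensity_eq_lintegral_mul _ hgmeas (κ.measurable_coe hB)]
        have hcongr : ∫⁻ y, (g * fun y => κ y B) y ∂(ν.restrict (Ioo 0 S)) =
            ∫⁻ y, (B.indicator 1 y + ENNReal.ofReal (y * (mb / Ib)) * lbn B)
              ∂(ν.restrict (Ioo 0 S)) := by
          apply lintegral_congr_ae
          refine (ae_restrict_mem hIoom).mono fun y hy => ?_
          obtain ⟨hy0, hyS⟩ := mem_Ioo.1 hy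
          have hmax : max y 0 = y := max_eq_left hy0.le
          have hD : 0 < y * mb + Ib := by positivity
          have haly : al y = Ib / (y * mb + Ib) := by rw [haldef]; simp [hmax]
          simp only [Pi.mul_apply]
          rw [hκapply y, if_neg (by linarith), if_pos hy, hκIapp y]
          simp only [Measure.add_apply, Measure.smul_apply, smul_eq_mul]
          rw [Measure.dirac_apply' _ hB]
          have hgapp : g y = 1 + ENNReal.ofReal (y * (mb / Ib)) := rfl
          rw [hgapp]
          have hgy : (1 : ENNReal) + ENNReal.ofReal (y * (mb / Ib)) =
              ENNReal.ofReal ((y * mb + Ib)/Ib) := by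
            rw [← ENNReal.ofReal_one, ← ENNReal.ofReal_add one_pos.le
              (by positivity), ]
            congr 1
            field_simp
            ring
          rw [hgy, mul_add, ← mul_assoc, ← mul_assoc,
            ← ENNReal.ofReal_mul (by positivity), ← ENNReal.ofReal_mul (by positivity)]
          have e1 : (y * mb + Ib)/Ib * al y = 1 := by
            rw [haly]; field_simp
          have e2 : (y * mb + Ib)/Ib * (1 - al y) = y * (mb / Ib) := by
            rw [haly]; field_simp; ring
          rw [e1, e2, ENNReal.ofReal_one, one_mul]
        have hmeas1 : Measurable fun y : ℝ => ENNReal.ofReal (y * (mb / Ib)) * lbn B := by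
          apply Measurable.mul_const
          exact (measurable_id.mul_const _).ennreal_ofReal
        have hmeas2 : Measurable fun y : ℝ => ENNReal.ofReal (y * (mb / Ib)) := by
          exact (measurable_id.mul_const _).ennreal_ofReal
        rw [hcongr, lintegral_add_right _ hmeas1,
          lintegral_indicator_one hB, Measure.restrict_apply hB,
          lintegral_mul_const _ hmeas2]
        have hlint : ∫⁻ y, ENNReal.ofReal (y * (mb / Ib)) ∂(ν.restrict (Ioo 0 S)) =
            ENNReal.ofReal ((Ipos - s0) * (mb / Ib)) := by
          rw [← ofReal_integral_eq_lintegral_ofReal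
            (hint'.integrableOn.mul_const _)
            ((ae_restrict_mem hIoom).mono fun y hy => by
              have := (mem_Ioo.1 hy).1
              positivity)]
          rw [integral_mul_const, hIooint]
        rw [hlint]
        congr 1
        rw [hlbndef, Measure.smul_apply, hlbdef, Measure.restrict_apply hB, smul_eq_mul,
          ← mul_assoc]
        congr 1
        rw [hAbE]
        rw [← ENNReal.ofReal_inv_of_pos hmbpos,
          ← ENNReal.ofReal_mul (mul_nonneg (by linarith [hs0le]) (div_nonneg hmb0 hIb0))]
        congr 1
        field_simp
      rw [hIpart]
      -- combine
      have hcoef : Cs * ν (B ∩ Ab) + ENNReal.ofReal ((Ipos - s0)/Ib) * ν (B ∩ Ab) =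
          ν (B ∩ Ab) := by
        rw [← add_mul, hCsdef, ← ENNReal.ofReal_add (div_nonneg (by linarith [hIss0]) hIb0)
          (div_nonneg (by linarith [hs0le]) hIb0)]
        have : (s0 - Is)/Ib + (Ipos - s0)/Ib = 1 := by
          rw [← add_div, hbalance]
          field_simp
          ring
        rw [this, ENNReal.ofReal_one, one_mul]
      rw [hdecomp B hB, inter_singleton_eq ν hB 0, inter_singleton_eq ν hB S]
      conv_lhs => rw [← hcoef]
      ring
    refine ⟨ρ, prob_of_bind κ hbind, κ, hκmarkov, fun x => ?_, hbind⟩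
    rw [hκapply x]
    split_ifs with h1 h2
    · exact hκSsimple
    · exact hκIsimple x h2
    · exact isSimpleBiased_dirac0 hβ1.le



/-- every atomic `β`-biased probability is a mixture of simple
`β`-biased probabilities. -/
theorem stmt1 (β : ℝ) (hβ : β ∈ Set.Ioo (0 : ℝ) 1) (ν : Measure ℝ)
    (h : IsAtomicBiased β ν) : IsMixtureOf ν (IsSimpleBiased β) := by
  classical
  obtain ⟨hprob, hint, hbar, hbdd, hatom⟩ := h
  haveI := hprob
  have hint' : Integrable (fun y => (y:ℝ)) ν := hint
  by_cases hneg : ν (Iio 0) = 0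
  · -- trivial case : ν = dirac 0
    have hnn : 0 ≤ᵐ[ν] fun y : ℝ => y := by
      rw [Filter.EventuallyLE, ae_iff]
      convert hneg using 2
      ext z; simp [not_le]
    have hid0 := (integral_eq_zero_iff_of_nonneg_ae hnn hint').1 hbar
    have hne : ν {x : ℝ | x ≠ 0} = 0 := by
      have h2 := ae_iff.1 hid0
      apply measure_mono_null _ h2
      intro z hz
      simpa using hz
    have hν : ν = Measure.dirac 0 := by
      ext B hB
      rw [Measure.dirac_apply' _ hB]
      have hdiff : ν (B \ {0}) = 0 := by
        apply measure_mono_null _ hne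
        intro z hz
        simpa using hz.2
      have h2 : ν B = ν (B ∩ {0}) := by
        have h3 := measure_inter_add_diff B (measurableSet_singleton 0) (μ := ν)
        rw [hdiff, add_zero] at h3
        exact h3.symm
      rw [h2]
      by_cases h0 : (0:ℝ) ∈ B
      · rw [inter_eq_self_of_subset_right (by simpa using h0), indicator_of_mem h0]
        have hc : ν ({0}ᶜ : Set ℝ) = 0 := by
          rw [show ({0}ᶜ : Set ℝ) = {x : ℝ | x ≠ 0} by ext z; simp]
          exact hne
        have h4 := measure_add_measure_compl (μ := ν) (measurableSet_singleton 0)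
        rw [hc, add_zero, measure_univ] at h4
        rw [h4]; simp
      · rw [indicator_of_notMem h0]
        have : B ∩ {0} = ∅ := by
          ext z
          simp only [mem_inter_iff, mem_singleton_iff, mem_empty_iff_false, iff_false, not_and]
          rintro hz rfl; exact h0 hz
        rw [this, measure_empty]
    refine ⟨Measure.dirac 0, by infer_instance, Kernel.const ℝ (Measure.dirac 0),
      by infer_instance, fun x => isSimpleBiased_dirac0 hβ.2.le, ?_⟩
    rw [hν]
    exact (Measure.dirac_bind (f := fun _ : ℝ => Measure.dirac (0:ℝ)) measurable_const 0).symm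
  · -- main case
    have hcompl : ν {x | x ∉ msupp ν} = 0 := msupp_compl_null ν
    have hub : ν (Ioi (Ssup ν)) = 0 := by
      apply measure_mono_null _ hcompl
      intro z hz
      simp only [mem_setOf_eq]
      intro hmem
      exact absurd (le_csSup hbdd hmem) (not_le.2 (mem_Ioi.1 hz))
    have hSpos : 0 < Ssup ν := by
      have hpos : ν (Ioi 0) ≠ 0 := by
        intro hz
        have hnn : 0 ≤ᵐ[ν] fun y : ℝ => -y := by
          rw [Filter.EventuallyLE, ae_iff]
          convert hz using 2
          ext z; simp [not_le]
        have hint2 : Integrable (fun y : ℝ => -y) ν := hint'.neg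
        have hz0 : ∫ y, -y ∂ν = 0 := by rw [integral_neg, hbar, neg_zero]
        have hz2 := (integral_eq_zero_iff_of_nonneg_ae hnn hint2).1 hz0
        apply hneg
        apply measure_mono_null _ (ae_iff.1 hz2)
        intro z hz'
        simp only [mem_setOf_eq, Pi.zero_apply]
        have : z < 0 := mem_Iio.1 hz'
        intro hcontra
        nlinarith [neg_eq_zero.1 hcontra]
      have hexists : ∃ x ∈ msupp ν, 0 < x := by
        by_contra hno
        push_neg at hno
        apply hpos
        apply measure_mono_null _ hcompl
        intro z hz
        simp only [mem_setOf_eq]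
        intro hmem
        exact absurd (hno z hmem) (not_le.2 (mem_Ioi.1 hz))
      obtain ⟨x, hx, hx0⟩ := hexists
      exact lt_of_lt_of_le hx0 (le_csSup hbdd hx)
    exact main_case hβ.1 hβ.2 hprob hint hbar hSpos hatom hub hneg


end
end

section
/- Let ν be a simple β-biased probability measure on ℝ, i.e., ν is centered at 0, has finite first moment, and ν|_{[0,∞)} = γ δ_M for some M ≥ 0 and γ ≥ β. Then for every function f ∈ Ψ (continuous, antisymmetric, f(0)=0, convex on ℝ₊), we have ∫ Z^β(f) dν ≤ 0, where Z^β(f)(x) = (1/a) f(a x) for x > 0 and Z^β(f)(x) = f(x) for x ≤ 0, with a = β/(1−β). -/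
open MeasureTheory ProbabilityTheory Set

noncomputable section

lemma exists_subgradient (f : ℝ → ℝ) (hconv : ConvexOn ℝ (Set.Ici 0) f) (p : ℝ) (hp : 0 < p) :
    ∃ s : ℝ, ∀ y : ℝ, 0 ≤ y → f p + s * (y - p) ≤ f y := by
  set T : Set ℝ := (fun y => (f y - f p) / (y - p)) '' Set.Ioi p with hT
  have hne : T.Nonempty := ⟨_, ⟨p + 1, by simp [hp], rfl⟩⟩
  have hlb : ∀ t ∈ T, (f p - f 0) / (p - 0) ≤ t := by
    rintro t ⟨y, hy, rfl⟩
    exact hconv.slope_mono_adjacent (mem_Ici.mpr le_rfl) (mem_Ici.mpr (le_trans hp.le (le_of_lt hy))) hp hy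
  have hbdd : BddBelow T := ⟨_, hlb⟩
  refine ⟨sInf T, fun y hy => ?_⟩
  rcases lt_trichotomy y p with h | h | h
  · have hslope : (f p - f y) / (p - y) ≤ sInf T := by
      apply le_csInf hne
      rintro t ⟨z, hz, rfl⟩
      exact hconv.slope_mono_adjacent (mem_Ici.mpr hy) (mem_Ici.mpr (le_trans hp.le hz.le)) h hz
    have hpy : 0 < p - y := by linarith
    have := (div_le_iff₀ hpy).mp hslope
    nlinarith
  · subst h; simp
  · have hsle : sInf T ≤ (f y - f p) / (y - p) := csInf_le hbdd ⟨y, h, rfl⟩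
    have hyp : 0 < y - p := by linarith
    have := (le_div_iff₀ hyp).mp hsle
    nlinarith


/-- if `ν` is simple `β`-biased with `ν|_{[0,∞)} = γ δ_M`, `γ ≥ β`,
then `∫ Z^β(f) dν ≤ 0` for every `f ∈ Ψ`. -/
theorem stmt2 (β : ℝ) (hβ : β ∈ Set.Ioo (0 : ℝ) 1) (ν : Measure ℝ)
    (hprob : IsProbabilityMeasure ν) (hint : Integrable id ν)
    (hbar : (∫ y, y ∂ν) = 0) (M γ : ℝ) (hM : 0 ≤ M) (hγ : β ≤ γ)
    (hres : ν.restrict (Set.Ici 0) = ENNReal.ofReal γ • Measure.dirac M)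
    (f : ℝ → ℝ) (hf : Continuous f) (hf0 : f 0 = 0)
    (hanti : ∀ x, f (-x) = -f x) (hconv : ConvexOn ℝ (Set.Ici 0) f)
    (hZint : Integrable (Zbeta β f) ν) :
    ∫ y, Zbeta β f y ∂ν ≤ 0 := by
  obtain ⟨hβ0, hβ1⟩ := hβ
  have hγ0 : 0 < γ := lt_of_lt_of_le hβ0 hγ
  have hβ' : (0:ℝ) < 1 - β := by linarith
  have hIci : ν (Set.Ici 0) = ENNReal.ofReal γ := by
    have h := congrArg (fun m : Measure ℝ => m Set.univ) hres
    simpa [Measure.restrict_apply_univ] using h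
  have hγ1 : γ ≤ 1 := by
    have h : ν (Set.Ici 0) ≤ 1 := prob_le_one
    rw [hIci] at h
    exact ENNReal.ofReal_le_one.mp h
  have hIio : ν (Set.Iio 0) = 1 - ENNReal.ofReal γ := by
    have h := measure_compl (measurableSet_Ici : MeasurableSet (Set.Ici (0:ℝ))) (measure_ne_top ν _)
    rw [compl_Ici] at h
    rw [h, measure_univ, hIci]
  have hIioR : (ν (Set.Iio 0)).toReal = 1 - γ := by
    rw [hIio, ENNReal.toReal_sub_of_le (ENNReal.ofReal_le_one.mpr hγ1) ENNReal.one_ne_top]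
    simp [ENNReal.toReal_ofReal hγ0.le]
  have hIciInt : ∀ g : ℝ → ℝ, ∫ y in Set.Ici 0, g y ∂ν = γ * g M := by
    intro g
    rw [show (∫ y in Set.Ici 0, g y ∂ν) = ∫ y, g y ∂(ν.restrict (Set.Ici 0)) from rfl, hres,
      integral_smul_measure, integral_dirac]
    simp [ENNReal.toReal_ofReal hγ0.le, smul_eq_mul]
  have hsplitZ := integral_add_compl (measurableSet_Ici : MeasurableSet (Set.Ici (0:ℝ))) hZint
  rw [compl_Ici] at hsplitZ
  have hmean : ∫ y in Set.Iio 0, y ∂ν = -(γ * M) := by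
    have hsplit := integral_add_compl (measurableSet_Ici : MeasurableSet (Set.Ici (0:ℝ))) hint
    rw [compl_Ici] at hsplit
    have h1 : ∫ y in Set.Ici 0, id y ∂ν = γ * M := hIciInt id
    simp only [id] at hsplit h1
    rw [hbar] at hsplit
    linarith
  rcases eq_or_lt_of_le hM with hM0 | hMpos
  · -- M = 0
    have hmean0 : ∫ y in Set.Iio 0, y ∂ν = 0 := by rw [hmean, ← hM0]; ring
    have hnn : 0 ≤ᵐ[ν.restrict (Set.Iio 0)] fun y => -y := by
      filter_upwards [ae_restrict_mem measurableSet_Iio] with y hy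
      simp only [Set.mem_Iio] at hy
      simp; linarith
    have hintn : Integrable (fun y : ℝ => -y) (ν.restrict (Set.Iio 0)) :=
      (hint.restrict (s := Set.Iio 0)).neg
    have hz : ∫ y in Set.Iio 0, -y ∂ν = 0 := by rw [integral_neg, hmean0, neg_zero]
    have hae := (integral_eq_zero_iff_of_nonneg_ae hnn hintn).mp hz
    have hfalse : ∀ᵐ y ∂ν.restrict (Set.Iio 0), False := by
      filter_upwards [hae, ae_restrict_mem measurableSet_Iio] with y h1 h2
      simp only [Set.mem_Iio] at h2
      simp only [Pi.zero_apply] at h1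
      have : y = 0 := by simpa using congrArg Neg.neg h1
      linarith
    have hnull : ν (Set.Iio 0) = 0 := by
      have h := ae_iff.mp hfalse
      simpa [Measure.restrict_apply_univ] using h
    have hr0 : ν.restrict (Set.Iio 0) = 0 := Measure.restrict_eq_zero.mpr hnull
    have : ∫ y in Set.Iio 0, Zbeta β f y ∂ν = 0 := by rw [hr0]; simp
    rw [← hsplitZ, this, add_zero, hIciInt]
    have hZ0 : Zbeta β f M = 0 := by
      rw [← hM0]; simp [Zbeta, hf0]
    rw [hZ0]; simp
  · -- M > 0
    set p : ℝ := β / (1 - β) * M with hpdef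
    have hp : 0 < p := by positivity
    obtain ⟨s, hs⟩ := exists_subgradient f hconv p hp
    have hfs : f p ≤ s * p := by
      have := hs 0 le_rfl
      rw [hf0] at this; nlinarith
    have hptw : ∀ x ∈ Set.Iio (0:ℝ), Zbeta β f x ≤ s * x + (s * p - f p) := by
      intro x hx
      simp only [Set.mem_Iio] at hx
      have hZx : Zbeta β f x = f x := by simp [Zbeta, not_lt.mpr hx.le]
      have h1 := hs (-x) (by linarith)
      have h2 : f (-x) = - f x := hanti x
      rw [hZx]; nlinarith
    have hlint : Integrable (fun x : ℝ => s * x + (s * p - f p)) ν := by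
      have h1 : Integrable (fun x : ℝ => s * x) ν := hint.const_mul s
      exact h1.add (integrable_const _)
    have hle : ∫ x in Set.Iio 0, Zbeta β f x ∂ν ≤ ∫ x in Set.Iio 0, (s * x + (s * p - f p)) ∂ν :=
      setIntegral_mono_on hZint.integrableOn hlint.integrableOn measurableSet_Iio hptw
    have hlin : ∫ x in Set.Iio 0, (s * x + (s * p - f p)) ∂ν
        = s * (-(γ * M)) + (s * p - f p) * (1 - γ) := by
      have h1 : Integrable (fun x : ℝ => s * x) ν := by
        simpa only [id_eq] using hint.const_mul s
      rw [integral_add (h1.restrict (s := Set.Iio 0)) (integrable_const _),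
        integral_const_mul]
      rw [hmean, setIntegral_const, Measure.real_def, hIioR, smul_eq_mul]
      ring
    have hZM : Zbeta β f M = (1 - β) / β * f p := by
      simp [Zbeta, hMpos, hpdef]
    have key : 0 ≤ (γ - β) * (s * p - f p) := mul_nonneg (by linarith) (by linarith)
    have hpM : p * (1 - β) = β * M := by
      rw [hpdef]; field_simp
    have hq : β * ((1 - β) / β) = 1 - β := by field_simp
    rw [← hsplitZ, hIciInt, hZM]
    calc γ * ((1 - β) / β * f p) + ∫ x in Set.Iio 0, Zbeta β f x ∂ν
        ≤ γ * ((1 - β) / β * f p) + (s * (-(γ * M)) + (s * p - f p) * (1 - γ)) := by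
          rw [← hlin]; linarith
      _ = ((γ - β) * (f p - s * p)) / β := by
          rw [eq_div_iff (ne_of_gt hβ0)]
          linear_combination γ * f p * hq + s * γ * hpM
      _ ≤ 0 := div_nonpos_of_nonpos_of_nonneg (by nlinarith [key]) hβ0.le


end
end

section
/- Let ν be a probability measure on ℝ with finite first moment and barycenter 0, and β ∈ (0,1), a = β/(1−β). If ∫ φ dν^R ≤ a ∫ φ d(R^β_# ν^L) for all convex functions φ : [0,∞) → ℝ with φ(0) = 0 (where ν^L = ν|_{(-∞,0)}, ν^R = ν|_{[0,∞)}, and R^β(x) = −a x for x ≥ 0 and −x/a for x ≤ 0), then the total masses satisfy ‖ν^R‖ ≥ a ‖ν^L‖. -/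
open MeasureTheory ProbabilityTheory Set

noncomputable section

/-- if `∫ φ dν^R ≤ a ∫ φ d(R^β_# ν^L)` for all convex `φ` on `[0,∞)`
with `φ(0)=0`, then `‖ν^R‖ ≥ a ‖ν^L‖`. -/
theorem stmt4 (β : ℝ) (hβ : β ∈ Set.Ioo (0 : ℝ) 1) (ν : Measure ℝ)
    (hprob : IsProbabilityMeasure ν) (hint : Integrable id ν)
    (hbar : (∫ y, y ∂ν) = 0)
    (h : ∀ φ : ℝ → ℝ, ConvexOn ℝ (Set.Ici 0) φ → φ 0 = 0 →
      Integrable φ (ν.restrict (Set.Ici 0)) →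
      Integrable φ ((ν.restrict (Set.Iio 0)).map (Rbeta β)) →
      ∫ y, φ y ∂(ν.restrict (Set.Ici 0)) ≤
        (β / (1 - β)) * ∫ y, φ y ∂((ν.restrict (Set.Iio 0)).map (Rbeta β))) :
    (β / (1 - β)) * (ν (Set.Iio 0)).toReal ≤ (ν (Set.Ici 0)).toReal := by
  obtain ⟨hβ0, hβ1⟩ := hβ
  have h1β : 0 < 1 - β := by linarith
  set a := β / (1 - β) with ha_def
  have ha : 0 < a := div_pos hβ0 h1β
  set μR := ν.restrict (Set.Ici 0) with hμR
  set μL := ν.restrict (Set.Iio 0) with hμL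
  have hR : Measurable (Rbeta β) := by
    unfold Rbeta
    exact Measurable.ite (measurableSet_le measurable_const measurable_id)
      (measurable_const.mul measurable_id) (measurable_const.mul measurable_id)
  set τ := μL.map (Rbeta β) with hτ
  set φ : ℕ → ℝ → ℝ := fun n x => max (-((n : ℝ) + 1) * x) (-1) with hφ
  have hφcont : ∀ n, Continuous (φ n) := fun n =>
    Continuous.max (by continuity) continuous_const
  have hφ0 : ∀ n, φ n 0 = 0 := by intro n; simp [hφ]
  have hφconv : ∀ n, ConvexOn ℝ (Set.Ici (0 : ℝ)) (φ n) := by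
    intro n
    refine ConvexOn.sup ?_ (convexOn_const _ (convex_Ici 0))
    refine ⟨convex_Ici 0, ?_⟩
    intro x _ y _ p q _ _ _
    simp only [smul_eq_mul]
    exact le_of_eq (by ring)
  have hφle : ∀ n x, (-1 : ℝ) ≤ φ n x := fun n x => le_max_right _ _
  have hφub : ∀ n x, 0 ≤ x → φ n x ≤ 0 := by
    intro n x hx
    apply max_le _ (by norm_num)
    have hn1 : (0 : ℝ) ≤ (n : ℝ) + 1 := by positivity
    nlinarith
  have hφbound : ∀ n x, 0 ≤ x → |φ n x| ≤ 1 := by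
    intro n x hx
    rw [abs_le]
    exact ⟨hφle n x, le_trans (hφub n x hx) zero_le_one⟩
  have hRpos : ∀ x : ℝ, x < 0 → 0 < Rbeta β x := by
    intro x hx
    unfold Rbeta
    rw [if_neg (not_le.mpr hx)]
    have hc : 0 < (1 - β) / β := div_pos h1β hβ0
    nlinarith [mul_pos hc (neg_pos.mpr hx)]
  have hIntR : ∀ n, Integrable (φ n) μR := by
    intro n
    refine Integrable.mono' (integrable_const 1) ((hφcont n).aestronglyMeasurable) ?_
    filter_upwards [ae_restrict_mem measurableSet_Ici] with x hx
    simpa [Real.norm_eq_abs] using hφbound n x hx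
  have hcomp : ∀ n, Integrable (fun x => φ n (Rbeta β x)) μL := by
    intro n
    refine Integrable.mono' (integrable_const 1)
      (((hφcont n).measurable.comp hR).aestronglyMeasurable) ?_
    filter_upwards [ae_restrict_mem measurableSet_Iio] with x hx
    simpa [Real.norm_eq_abs] using hφbound n _ (le_of_lt (hRpos x hx))
  have hIntτ : ∀ n, Integrable (φ n) τ := by
    intro n
    rw [hτ, integrable_map_measure (hφcont n).aestronglyMeasurable hR.aemeasurable]
    exact hcomp n
  have key : ∀ n, ∫ y, φ n y ∂μR ≤ a * ∫ y, φ n y ∂τ := fun n =>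
    h (φ n) (hφconv n) (hφ0 n) (hIntR n) (hIntτ n)
  have hmap : ∀ n, ∫ y, φ n y ∂τ = ∫ x, φ n (Rbeta β x) ∂μL := fun n => by
    rw [hτ, integral_map hR.aemeasurable (hφcont n).aestronglyMeasurable]
  have hLHS : ∀ n, -(ν (Set.Ici 0)).toReal ≤ ∫ y, φ n y ∂μR := by
    intro n
    have := integral_mono (μ := μR) (integrable_const (-1)) (hIntR n) (fun x => hφle n x)
    simpa [integral_const, Measure.restrict_apply_univ, hμR, measureReal_def] using this
  have hIL : ∫ x, (-1 : ℝ) ∂μL = -(ν (Set.Iio 0)).toReal := by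
    simp [integral_const, Measure.restrict_apply_univ, hμL, measureReal_def]
  have htends : Filter.Tendsto (fun n => ∫ x, φ n (Rbeta β x) ∂μL)
      Filter.atTop (nhds (-(ν (Set.Iio 0)).toReal)) := by
    rw [← hIL]
    apply tendsto_integral_of_dominated_convergence (fun _ => (1 : ℝ))
    · exact fun n => ((hφcont n).measurable.comp hR).aestronglyMeasurable
    · exact integrable_const 1
    · intro n
      filter_upwards [ae_restrict_mem measurableSet_Iio] with x hx
      simpa [Real.norm_eq_abs] using hφbound n _ (le_of_lt (hRpos x hx))
    · filter_upwards [ae_restrict_mem measurableSet_Iio] with x hx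
      have hr := hRpos x hx
      apply Filter.Tendsto.congr' _ (tendsto_const_nhds (x := (-1 : ℝ)))
      obtain ⟨N, hN⟩ := exists_nat_ge (1 / Rbeta β x)
      rw [Filter.EventuallyEq, Filter.eventually_atTop]
      refine ⟨N, fun n hn => ?_⟩
      have h1 : (1 : ℝ) ≤ ((n : ℝ) + 1) * Rbeta β x := by
        have hle : (1 : ℝ) / Rbeta β x ≤ (n : ℝ) :=
          le_trans hN (Nat.cast_le.mpr hn)
        rw [div_le_iff₀ hr] at hle
        nlinarith
      simp only [hφ]
      exact (max_eq_right (by nlinarith)).symm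
  have htends2 : Filter.Tendsto (fun n => a * ∫ x, φ n (Rbeta β x) ∂μL)
      Filter.atTop (nhds (a * (-(ν (Set.Iio 0)).toReal))) := htends.const_mul a
  have hfinal : -(ν (Set.Ici 0)).toReal ≤ a * (-(ν (Set.Iio 0)).toReal) := by
    refine ge_of_tendsto' htends2 (fun n => ?_)
    calc -(ν (Set.Ici 0)).toReal ≤ ∫ y, φ n y ∂μR := hLHS n
      _ ≤ a * ∫ y, φ n y ∂τ := key n
      _ = a * ∫ x, φ n (Rbeta β x) ∂μL := by rw [hmap n]
  rw [mul_neg] at hfinal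
  linarith

end
end

section
/- Let β ∈ (0,1), a = β/(1−β), and let ν be a probability measure on ℝ with finite first moment that is β-biased around x, and suppose s(ν) := inf supp(ν) > −∞. Then S(ν) := sup supp(ν) ≤ x/β − s(ν)/a. -/
open MeasureTheory ProbabilityTheory Set

noncomputable section

lemma msupp_eq (ν : Measure ℝ) : msupp ν = ν.everywherePosSubset univ := by
  ext y
  simp only [msupp, Measure.everywherePosSubset, mem_setOf_eq, mem_univ, true_and,
    nhdsWithin_univ]
  constructor
  · intro h n hn
    obtain ⟨ε, hε, hsub⟩ := Metric.mem_nhds_iff.1 hn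
    exact (h ε hε).trans_le (measure_mono hsub)
  · intro h ε hε
    exact h _ (Metric.ball_mem_nhds y hε)

lemma measure_compl_msupp (ν : Measure ℝ) [IsFiniteMeasure ν] : ν (msupp ν)ᶜ = 0 := by
  rw [msupp_eq]
  have := ν.everywherePosSubset_ae_eq (s := univ) MeasurableSet.univ
  have h2 := MeasureTheory.ae_eq_set.1 this
  rw [compl_eq_univ_diff]; exact h2.2

lemma measure_Ioi_Ssup (ν : Measure ℝ) [IsFiniteMeasure ν] (h : BddAbove (msupp ν)) :
    ν (Ioi (Ssup ν)) = 0 := by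
  refine measure_mono_null ?_ (measure_compl_msupp ν)
  intro y hy hmem
  exact absurd (le_csSup h hmem) (not_le.2 hy)

lemma measure_Iio_sinf (ν : Measure ℝ) [IsFiniteMeasure ν] (h : BddBelow (msupp ν)) :
    ν (Iio (sinf ν)) = 0 := by
  refine measure_mono_null ?_ (measure_compl_msupp ν)
  intro y hy hmem
  exact absurd (csInf_le h hmem) (not_le.2 hy)

lemma atomic_bound {β t : ℝ} (hβ0 : 0 < β) (hβ1 : β < 1) {m : Measure ℝ}
    (hm : IsAtomicBiased β m) (ht : m (Iio t) = 0) :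
    m (Ioi (((1 - β) / β) * (-t))) = 0 := by
  obtain ⟨hprob, hint, hmean, hbdd, hatom⟩ := hm
  set M := Ssup m with hM
  have hMioi : m (Ioi M) = 0 := measure_Ioi_Ssup m hbdd
  have hae : ∀ᵐ y ∂m, y ∈ Icc t M := by
    have : m (Icc t M)ᶜ = 0 := by
      refine measure_mono_null ?_ (measure_union_null ht hMioi)
      intro y hy
      simp only [mem_compl_iff, mem_Icc, not_and, not_le] at hy
      rcases le_or_gt t y with h1 | h1
      · exact Or.inr (hy h1)
      · exact Or.inl h1
    exact this
  have hconst : Integrable (fun _ : ℝ => t) m := integrable_const t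
  have htle : t ≤ 0 := by
    have : t ≤ ∫ y, y ∂m := by
      rw [show t = ∫ _, t ∂m by simp]
      exact integral_mono_ae hconst hint (hae.mono fun y hy => hy.1)
    simpa [hmean] using this
  have hMge : 0 ≤ M := by
    have : (∫ y, y ∂m) ≤ M := by
      rw [show M = ∫ _, M ∂m by simp]
      exact integral_mono_ae hint (integrable_const M) (hae.mono fun y hy => hy.2)
    simpa [hmean] using this
  set p := (m {M}).toReal with hp
  have hmfin : m {M} ≠ ⊤ := (measure_lt_top m _).ne
  have hβp : β ≤ p := (ENNReal.ofReal_le_iff_le_toReal hmfin).1 hatom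
  have hp1 : p ≤ 1 := by
    rw [hp]
    exact ENNReal.toReal_le_of_le_ofReal zero_le_one (by simpa using prob_le_one (μ := m) (s := {M}))
  have hsplit : (∫ y in {M}, y ∂m) + ∫ y in {M}ᶜ, y ∂m = ∫ y, y ∂m :=
    integral_add_compl (measurableSet_singleton M) hint
  have h1 : (∫ y in {M}, y ∂m) = p * M := by
    rw [Measure.restrict_singleton, integral_smul_measure, integral_dirac]
    simp [hp, smul_eq_mul]
  have h2 : t * (1 - p) ≤ ∫ y in {M}ᶜ, y ∂m := by
    have hcompl : (m {M}ᶜ).toReal = 1 - p := by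
      rw [measure_compl (measurableSet_singleton M) hmfin, measure_univ,
        ENNReal.toReal_sub_of_le prob_le_one ENNReal.one_ne_top]
      simp [hp]
    have : (∫ _ in {M}ᶜ, t ∂m) ≤ ∫ y in {M}ᶜ, y ∂m := by
      refine integral_mono_ae (integrable_const t) (hint.restrict) ?_
      exact (ae_restrict_of_ae (hae.mono fun y hy => hy.1))
    have heq : (∫ _ in {M}ᶜ, t ∂m) = t * (1 - p) := by
      rw [setIntegral_const, measureReal_def, hcompl, smul_eq_mul, mul_comm]
    linarith [this, heq.symm.le]
  have hkey : p * M ≤ (1 - p) * (-t) := by nlinarith [hsplit, h1, h2, hmean]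
  have hMC : M ≤ ((1 - β) / β) * (-t) := by
    have hp0 : 0 < p := lt_of_lt_of_le hβ0 hβp
    rw [div_mul_eq_mul_div, le_div_iff₀ hβ0]
    have h3 : M * β ≤ p * M := by nlinarith
    have h4 : (1 - p) * (-t) ≤ (1 - β) * (-t) := by nlinarith
    linarith
  exact measure_mono_null (fun y hy => lt_of_le_of_lt hMC hy) hMioi


/-- if `ν` is `β`-biased around `x` and `s(ν) > -∞` then
`S(ν) ≤ x/β - s(ν)/a`. -/
theorem stmt7 (β x : ℝ) (hβ : β ∈ Set.Ioo (0 : ℝ) 1) (ν : Measure ℝ)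
    (hprob : IsProbabilityMeasure ν) (hint : Integrable id ν)
    (h : IsBiasedAround β x ν) (hbdd : BddBelow (msupp ν)) :
    BddAbove (msupp ν) ∧ Ssup ν ≤ x / β - sinf ν * ((1 - β) / β) := by
  obtain ⟨hβ0, hβ1⟩ := hβ
  obtain ⟨ρ, hρ, κ, hκ, hPa, heq⟩ := h
  set f : ℝ → ℝ := fun y => y - x with hf
  have hfm : Measurable f := measurable_id.sub_const x
  set s := sinf ν with hs
  set t := s - x with htdef
  have hν_Iio : ν (Iio s) = 0 := measure_Iio_sinf ν hbdd
  have hmap : (ν.map f) (Iio t) = 0 := by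
    rw [Measure.map_apply hfm measurableSet_Iio]
    have hpre : f ⁻¹' Iio t = Iio s := by
      ext y
      simp only [hf, mem_preimage, mem_Iio]
      constructor <;> intro <;> linarith
    rw [hpre]; exact hν_Iio
  have hbind : ∀ B : Set ℝ, MeasurableSet B → (ν.map f) B = ∫⁻ z, κ z B ∂ρ := by
    intro B hB
    rw [heq, Measure.bind_apply hB κ.measurable.aemeasurable]
  have hae : ∀ᵐ z ∂ρ, κ z (Iio t) = 0 := by
    have h0 : ∫⁻ z, κ z (Iio t) ∂ρ = 0 := by
      rw [← hbind _ measurableSet_Iio]; exact hmap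
    exact (lintegral_eq_zero_iff (κ.measurable_coe measurableSet_Iio)).1 h0
  set C := ((1 - β) / β) * (-t) with hC
  have haeC : ∀ᵐ z ∂ρ, κ z (Ioi C) = 0 :=
    hae.mono fun z hz => atomic_bound hβ0 hβ1 (hPa z) hz
  have hmapC : (ν.map f) (Ioi C) = 0 := by
    rw [hbind _ measurableSet_Ioi]
    exact (lintegral_eq_zero_iff (κ.measurable_coe measurableSet_Ioi)).2 haeC
  have hνC : ν (Ioi (x + C)) = 0 := by
    have hpre : f ⁻¹' Ioi C = Ioi (x + C) := by
      ext y
      simp only [hf, mem_preimage, mem_Ioi]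
      constructor <;> intro <;> linarith
    rw [← hpre, ← Measure.map_apply hfm measurableSet_Ioi]; exact hmapC
  have hsub : msupp ν ⊆ Iic (x + C) := by
    intro y hy
    by_contra hgt
    rw [mem_Iic, not_le] at hgt
    have hball : Metric.ball y (y - (x + C)) ⊆ Ioi (x + C) := by
      intro z hz
      rw [Metric.mem_ball, Real.dist_eq] at hz
      rw [mem_Ioi]
      rcases abs_lt.1 hz with ⟨h1, h2⟩
      linarith
    have hpos := hy (y - (x + C)) (by linarith)
    rw [measure_mono_null hball hνC] at hpos
    exact lt_irrefl 0 hpos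
  refine ⟨⟨x + C, hsub⟩, ?_⟩
  have hne : (msupp ν).Nonempty := by
    by_contra hempty
    rw [not_nonempty_iff_eq_empty] at hempty
    have h0 := measure_compl_msupp ν
    rw [hempty, compl_empty, measure_univ] at h0
    exact one_ne_zero h0
  have hSsup : Ssup ν ≤ x + C := csSup_le hne hsub
  have hEq : x + C = x / β - s * ((1 - β) / β) := by
    rw [hC, htdef]
    field_simp
    ring

  linarith

end
end

section
/- Let β ∈ (0,1), g : ℝ → ℝ continuous with |g(y)| ≤ C(1+|y|), and define the β-envelope g_β(x) = inf{ ∫ g dρ : ρ ∈ 𝒫₁(ℝ), bar(ρ) = x, ρ({max supp(ρ)}) ≥ β }. Then g_β(x) = inf{ ∫ g dν : ν ∈ 𝒫₁(ℝ), ν is β-biased around x }. -/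
open MeasureTheory ProbabilityTheory Set

noncomputable section

section Aux

open Metric

lemma sSup_image_add (s : Set ℝ) (hne : s.Nonempty) (hbdd : BddAbove s) (c : ℝ) :
    sSup ((fun y => y + c) '' s) = sSup s + c := by
  have h := isLUB_csSup hne hbdd
  refine IsLUB.csSup_eq ?_ (hne.image _)
  constructor
  · rintro z ⟨y, hy, rfl⟩
    exact add_le_add_left (h.1 hy) c
  · intro b hb
    have h2 : ∀ y ∈ s, y ≤ b - c := fun y hy => le_sub_iff_add_le.mpr (hb ⟨y, hy, rfl⟩)
    have := h.2 h2
    linarith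

lemma preimage_addc_ball (c z ε : ℝ) :
    (fun y : ℝ => y + c) ⁻¹' Metric.ball z ε = Metric.ball (z - c) ε := by
  ext y
  simp only [Set.mem_preimage, Metric.mem_ball, Real.dist_eq]
  have : y + c - z = y - (z - c) := by ring
  rw [this]

lemma shiftQ {β : ℝ} (hβ : 0 < β) (m : Measure ℝ) (x c : ℝ)
    (h1 : IsProbabilityMeasure m) (h2 : Integrable id m) (h3 : (∫ y, y ∂m) = x)
    (h4 : BddAbove (msupp m)) (h5 : ENNReal.ofReal β ≤ m {Ssup m}) :
    IsProbabilityMeasure (m.map (fun y => y + c)) ∧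
    Integrable id (m.map (fun y => y + c)) ∧
    (∫ y, y ∂(m.map (fun y => y + c))) = x + c ∧
    BddAbove (msupp (m.map (fun y => y + c))) ∧
    ENNReal.ofReal β ≤ (m.map (fun y => y + c)) {Ssup (m.map (fun y => y + c))} := by
  haveI := h1
  have hmeas : Measurable fun y : ℝ => y + c := measurable_add_const c
  have hmem : ∀ z : ℝ, z ∈ msupp (m.map (fun y => y + c)) ↔ z - c ∈ msupp m := by
    intro z
    simp only [msupp, Set.mem_setOf_eq]
    constructor
    · intro h ε hε
      have := h ε hε
      rwa [Measure.map_apply hmeas Metric.isOpen_ball.measurableSet, preimage_addc_ball] at this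
    · intro h ε hε
      rw [Measure.map_apply hmeas Metric.isOpen_ball.measurableSet, preimage_addc_ball]
      exact h ε hε
  have himg : msupp (m.map (fun y => y + c)) = (fun y => y + c) '' msupp m := by
    ext z
    rw [hmem]
    constructor
    · intro h
      exact ⟨z - c, h, by ring⟩
    · rintro ⟨y, hy, rfl⟩
      simpa using hy
  have hSmem : Ssup m ∈ msupp m := by
    intro ε hε
    refine lt_of_lt_of_le (lt_of_lt_of_le (ENNReal.ofReal_pos.mpr hβ) h5) (measure_mono ?_)
    exact Set.singleton_subset_iff.mpr (Metric.mem_ball_self hε)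
  have hne : (msupp m).Nonempty := ⟨_, hSmem⟩
  have hSsup : Ssup (m.map (fun y => y + c)) = Ssup m + c := by
    rw [Ssup, himg, sSup_image_add _ hne h4]
    rfl
  refine ⟨Measure.isProbabilityMeasure_map hmeas.aemeasurable, ?_, ?_, ?_, ?_⟩
  · rw [integrable_map_measure aestronglyMeasurable_id hmeas.aemeasurable]
    exact h2.add (integrable_const c)
  · have e1 : (∫ y, y ∂(m.map (fun y => y + c))) = ∫ a, (a + c) ∂m :=
      integral_map hmeas.aemeasurable aestronglyMeasurable_id
    have e2 : (∫ a, (a + c) ∂m) = (∫ a, a ∂m) + ∫ _, (c : ℝ) ∂m :=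
      integral_add h2 (integrable_const c)
    rw [e1, e2, h3, integral_const]
    simp
  · rw [himg]
    obtain ⟨M, hM⟩ := h4
    exact ⟨M + c, by rintro z ⟨y, hy, rfl⟩; exact add_le_add_left (hM hy) c⟩
  · rw [hSsup, Measure.map_apply hmeas (measurableSet_singleton _)]
    have : (fun y : ℝ => y + c) ⁻¹' {Ssup m + c} = {Ssup m} := by ext y; simp
    rw [this]
    exact h5

lemma integrable_of_growth {g : ℝ → ℝ} (hg : Continuous g) {C : ℝ}
    (hgC : ∀ y, |g y| ≤ C * (1 + |y|)) (ν : Measure ℝ) [IsFiniteMeasure ν]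
    (hid : Integrable id ν) : Integrable g ν := by
  have hbound : Integrable (fun y => C * (1 + |y|)) ν :=
    (((integrable_const (1 : ℝ)).add hid.abs).const_mul C)
  refine hbound.mono' hg.aestronglyMeasurable ?_
  exact Filter.Eventually.of_forall fun y => by simpa [Real.norm_eq_abs] using hgC y

lemma bind_eq_snd_compProd (ρ : Measure ℝ) [SFinite ρ] (κ : ProbabilityTheory.Kernel ℝ ℝ)
    [ProbabilityTheory.IsSFiniteKernel κ] :
    ρ.bind (fun u => κ u) = (ρ.compProd κ).snd := by
  ext s hs
  rw [Measure.bind_apply hs κ.measurable.aemeasurable, Measure.snd_apply hs,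
    Measure.compProd_apply (measurable_snd hs)]
  rfl

end Aux

/-- the `β`-envelope of `g`, defined as the infimum of `∫ g dρ` over
probabilities `ρ` with barycenter `x` and an atom of mass `≥ β` at the maximum of
their support, equals the infimum of `∫ g dν` over `ν` that are `β`-biased around `x`. -/


theorem stmt19 (β x : ℝ) (hβ : β ∈ Set.Ioo (0 : ℝ) 1) (g : ℝ → ℝ)
    (hg : Continuous g) (C : ℝ) (hgC : ∀ y, |g y| ≤ C * (1 + |y|)) :
    sInf {r : ℝ | ∃ ρ : Measure ℝ, IsProbabilityMeasure ρ ∧ Integrable id ρ ∧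
        (∫ y, y ∂ρ) = x ∧ BddAbove (msupp ρ) ∧ ENNReal.ofReal β ≤ ρ {Ssup ρ} ∧
        r = ∫ y, g y ∂ρ} =
      sInf {r : ℝ | ∃ ν : Measure ℝ, IsProbabilityMeasure ν ∧ Integrable id ν ∧
        IsBiasedAround β x ν ∧ r = ∫ y, g y ∂ν} := by
  obtain ⟨hβ0, hβ1⟩ := hβ
  set L := {r : ℝ | ∃ ρ : Measure ℝ, IsProbabilityMeasure ρ ∧ Integrable id ρ ∧
      (∫ y, y ∂ρ) = x ∧ BddAbove (msupp ρ) ∧ ENNReal.ofReal β ≤ ρ {Ssup ρ} ∧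
      r = ∫ y, g y ∂ρ} with hLdef
  set R := {r : ℝ | ∃ ν : Measure ℝ, IsProbabilityMeasure ν ∧ Integrable id ν ∧
      IsBiasedAround β x ν ∧ r = ∫ y, g y ∂ν} with hRdef
  have hms : msupp (Measure.dirac x) = {x} := by
    ext z
    simp only [msupp, Set.mem_setOf_eq, Set.mem_singleton_iff]
    constructor
    · intro h
      by_contra hzx
      have hd : 0 < dist z x := dist_pos.mpr hzx
      have h2 := h (dist z x) hd
      have hx : x ∉ Metric.ball z (dist z x) := by
        rw [Metric.mem_ball, dist_comm]
        exact lt_irrefl _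
      rw [Measure.dirac_apply' x Metric.isOpen_ball.measurableSet,
        Set.indicator_of_notMem hx] at h2
      exact lt_irrefl _ h2
    · rintro rfl ε hε
      rw [Measure.dirac_apply' z Metric.isOpen_ball.measurableSet,
        Set.indicator_of_mem (Metric.mem_ball_self hε)]
      norm_num
  have hidd : Integrable id (Measure.dirac x) :=
    ⟨aestronglyMeasurable_id, by simp [HasFiniteIntegral, lintegral_dirac]⟩
  have hLne : L.Nonempty := by
    refine ⟨∫ y, g y ∂(Measure.dirac x), Measure.dirac x, inferInstance, hidd, ?_, ?_, ?_, rfl⟩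
    · exact integral_dirac (fun y => y) x
    · rw [hms]; exact bddAbove_singleton
    · rw [Ssup, hms, csSup_singleton, Measure.dirac_apply_of_mem (Set.mem_singleton x)]
      exact ENNReal.ofReal_le_one.mpr hβ1.le
  have hsub : L ⊆ R := by
    rintro r ⟨ρ, h1, h2, h3, h4, h5, h6⟩
    haveI := h1
    refine ⟨ρ, h1, h2, ?_, h6⟩
    have hfun : (fun y : ℝ => y - x) = fun y : ℝ => y + (-x) := by funext y; ring
    have Q := shiftQ hβ0 ρ x (-x) h1 h2 h3 h4 h5
    have hAtomic : IsAtomicBiased β (ρ.map (fun y => y - x)) := by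
      rw [hfun]
      exact ⟨Q.1, Q.2.1, by rw [Q.2.2.1]; ring, Q.2.2.2.1, Q.2.2.2.2⟩
    haveI : IsProbabilityMeasure (ρ.map (fun y => y - x)) := hAtomic.1
    refine ⟨Measure.dirac 0, inferInstance,
      ProbabilityTheory.Kernel.const ℝ (ρ.map (fun y => y - x)), inferInstance, fun u => ?_, ?_⟩
    · simpa [ProbabilityTheory.Kernel.const_apply] using hAtomic
    · have heq : (fun u : ℝ => (ProbabilityTheory.Kernel.const ℝ (ρ.map (fun y => y - x))) u)
          = fun _ : ℝ => ρ.map (fun y => y - x) := by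
        funext u; simp
      rw [heq, Measure.dirac_bind measurable_const]
  have key : ∀ r ∈ R, BddBelow L → sInf L ≤ r := by
    rintro r ⟨ν, hprob, hint, hbia, rfl⟩ hbddL
    haveI := hprob
    obtain ⟨ρ', hρ'prob, κ, hκ, hPκ, hbind⟩ := hbia
    haveI := hρ'prob; haveI := hκ
    have hsubm : Measurable fun y : ℝ => y - x := measurable_id.sub measurable_const
    have hback : (ν.map (fun y => y - x)).map (fun y => y + x) = ν := by
      rw [Measure.map_map (measurable_add_const x) hsubm]
      have hcomp : ((fun y : ℝ => y + x) ∘ fun y => y - x) = id := by funext y; simp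
      rw [hcomp, Measure.map_id]
    have hgint : Integrable g ν := integrable_of_growth hg hgC ν hint
    have hhc : Continuous (fun y : ℝ => g (y + x)) := hg.comp (continuous_add_right x)
    have hhint : Integrable (fun y => g (y + x)) (ν.map (fun y => y - x)) := by
      rw [integrable_map_measure hhc.aestronglyMeasurable hsubm.aemeasurable]
      have hcomp : ((fun y : ℝ => g (y + x)) ∘ fun y => y - x) = g := by
        funext y; simp [Function.comp]
      rwa [hcomp]
    have hνint : (∫ y, g y ∂ν) = ∫ y, g (y + x) ∂(ν.map (fun y => y - x)) := by
      conv_lhs => rw [← hback]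
      rw [integral_map (measurable_add_const x).aemeasurable hg.aestronglyMeasurable]
    have hbind' : ν.map (fun y => y - x) = (ρ'.compProd κ).snd := by
      rw [hbind, bind_eq_snd_compProd]
    have hsnd : (ρ'.compProd κ).snd = (ρ'.compProd κ).map Prod.snd := rfl
    have hπint : Integrable (fun p : ℝ × ℝ => g (p.2 + x)) (ρ'.compProd κ) := by
      have h' := hhint
      rw [hbind', hsnd,
        integrable_map_measure hhc.aestronglyMeasurable measurable_snd.aemeasurable] at h'
      exact h'
    have heq2 : (∫ y, g (y + x) ∂(ν.map (fun y => y - x)))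
        = ∫ u, ∫ y, g (y + x) ∂(κ u) ∂ρ' := by
      rw [hbind', hsnd, integral_map measurable_snd.aemeasurable hhc.aestronglyMeasurable,
        Measure.integral_compProd hπint]
    have hFint : Integrable (fun u => ∫ y, g (y + x) ∂(κ u)) ρ' := by
      have h' := hπint
      rw [show ρ'.compProd κ
          = (ProbabilityTheory.Kernel.const Unit ρ' ⊗ₖ
              ProbabilityTheory.Kernel.prodMkLeft Unit κ) () from rfl] at h'
      have h2 := h'.integral_compProd
      simpa [ProbabilityTheory.Kernel.const_apply,
        ProbabilityTheory.Kernel.prodMkLeft_apply] using h2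
    have hlower : ∀ u, sInf L ≤ ∫ y, g (y + x) ∂(κ u) := by
      intro u
      refine csInf_le hbddL ?_
      obtain ⟨hp, hi, hm, hb, ha⟩ := hPκ u
      have Q := shiftQ hβ0 (κ u) 0 x hp hi hm hb ha
      refine ⟨(κ u).map (fun y => y + x), Q.1, Q.2.1, by rw [Q.2.2.1]; ring,
        Q.2.2.2.1, Q.2.2.2.2, ?_⟩
      rw [integral_map (measurable_add_const x).aemeasurable hg.aestronglyMeasurable]
    have hfinal : sInf L ≤ ∫ u, (∫ y, g (y + x) ∂(κ u)) ∂ρ' := by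
      have h3 := integral_mono (integrable_const (sInf L)) hFint fun u => hlower u
      simpa using h3
    rw [hνint, heq2]
    exact hfinal
  by_cases hbdd : BddBelow L
  · refine le_antisymm ?_ ?_
    · exact le_csInf (hLne.mono hsub) fun r hr => key r hr hbdd
    · exact csInf_le_csInf ⟨sInf L, fun r hr => key r hr hbdd⟩ hLne hsub
  · rw [Real.sInf_of_not_bddBelow hbdd,
      Real.sInf_of_not_bddBelow fun hR => hbdd (hR.mono hsub)]


end
end
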